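/- arXiv:2503.09888 — 2 statements merged into one kernel-verified Lean document; each statement's English description precedes it below -/
import Mathlib

section
/- Let w be a k×ℓ partial permutation matrix and let c(w) ∈ S_m be its minimal-length completion. Then the map extending a k×ℓ pipe dream by elbow tiles (i.e. adding no crosses outside the k×ℓ grid) gives identifications RPipes(w) = RPipes(c(w)) and Pipes(w) = Pipes(c(w)). Moreover, if v ∈ S_{m'} is any extension of c(w) by the identity permutation, then RPipes(w) = RPipes(v) and Pipes(w) = Pipes(v). -/
open scoped Classical

noncomputable section

namespace QP

/-! ### Permutations, Demazure products and pipe dreams.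

All permutations are modeled as elements of `Equiv.Perm ℕ` (with 0-indexed
positions); a permutation "in `S_m`" is one fixing every `i ≥ m`. -/

/-- 0-Hecke (Demazure) right multiplication by the simple transposition `τᵢ = (i, i+1)`. -/
def hstep (u : Equiv.Perm ℕ) (i : ℕ) : Equiv.Perm ℕ :=
  if u i < u (i + 1) then u * Equiv.swap i (i + 1) else u

/-- Demazure product of a word in the simple transpositions (0-indexed). -/
def hword (l : List ℕ) : Equiv.Perm ℕ := l.foldl hstep 1

/-- Row reading word of a pipe dream on a `k × l` grid: rows top-to-bottom, within
each row right-to-left; a cross at (0-indexed) `(i,j)` contributes the letter `i+j`. -/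
def pipeWord (k l : ℕ) (P : Finset (ℕ × ℕ)) : List ℕ :=
  (List.range k).flatMap fun i =>
    (List.range l).reverse.filterMap fun j => if (i, j) ∈ P then some (i + j) else none

/-- Demazure product `δ(P)` of a pipe dream on a `k × l` grid. -/
def demazure (k l : ℕ) (P : Finset (ℕ × ℕ)) : Equiv.Perm ℕ := hword (pipeWord k l P)

/-- Coxeter length of a permutation, computed as the number of inversions among
positions `< m` (the true length whenever the permutation fixes all `i ≥ m`). -/
def lenB (m : ℕ) (v : Equiv.Perm ℕ) : ℕ :=
  ((Finset.range m ×ˢ Finset.range m).filter fun p => p.1 < p.2 ∧ v p.2 < v p.1).card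

/-- `v` fixes every point `≥ m`, i.e. `v ∈ S_m`. -/
def fixesFrom (m : ℕ) (v : Equiv.Perm ℕ) : Prop := ∀ i, m ≤ i → v i = i

/-- A `k × l` partial permutation matrix, recorded as its set of positions of 1s
(0-indexed). -/
def IsPartialPerm (k l : ℕ) (w : Finset (ℕ × ℕ)) : Prop :=
  (∀ p ∈ w, p.1 < k ∧ p.2 < l) ∧
  (∀ p ∈ w, ∀ q ∈ w, p.1 = q.1 → p = q) ∧
  (∀ p ∈ w, ∀ q ∈ w, p.2 = q.2 → p = q)

/-- 180° rotation of a subset of the `k × l` grid. -/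
def rotF (k l : ℕ) (w : Finset (ℕ × ℕ)) : Finset (ℕ × ℕ) :=
  w.image fun p => (k - 1 - p.1, l - 1 - p.2)

/-- Transpose of a subset of a grid. -/
def transposeF (w : Finset (ℕ × ℕ)) : Finset (ℕ × ℕ) := w.image fun p => (p.2, p.1)

/-- The northwest `k × l` truncation of (the matrix of) a permutation. -/
def matrixOf (k l : ℕ) (v : Equiv.Perm ℕ) : Finset (ℕ × ℕ) :=
  (Finset.range k ×ˢ Finset.range l).filter fun p => v p.1 = p.2

/-- `v` is a completion of the `k × l` partial permutation `w`, viewed inside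
`S_{k+l}`: its northwest `k × l` corner is exactly `w` and it fixes all `i ≥ k+l`. -/
def IsCompletion (k l : ℕ) (w : Finset (ℕ × ℕ)) (v : Equiv.Perm ℕ) : Prop :=
  (∀ i < k, ∀ j < l, (v i = j ↔ (i, j) ∈ w)) ∧ fixesFrom (k + l) v

/-- The minimal length completion `c(w)` of a `k × l` partial permutation matrix,
viewed in `S_{k+l}` (equivalently, the minimal-dimension completion extended by the
identity). -/
def completion (k l : ℕ) (w : Finset (ℕ × ℕ)) : Equiv.Perm ℕ :=
  if h : ∃ v, IsCompletion k l w v ∧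
      ∀ u, IsCompletion k l w u → lenB (k + l) v ≤ lenB (k + l) u
  then h.choose else 1

def w0fun (m : ℕ) (i : ℕ) : ℕ := if i < m then m - 1 - i else i

lemma w0_invol (m : ℕ) : Function.Involutive (w0fun m) := by
  intro i; unfold w0fun; split_ifs <;> omega

/-- The longest element of `S_m` (as a permutation of `ℕ` fixing `i ≥ m`). -/
def w0p (m : ℕ) : Equiv.Perm ℕ := (w0_invol m).toPerm

/-- 180° rotation of (the matrix of) a permutation in `S_m`. -/
def rotPerm (m : ℕ) (v : Equiv.Perm ℕ) : Equiv.Perm ℕ := w0p m * v * w0p m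

/-- `1^p × v`: the permutation fixing `0, …, p-1` and acting by a shifted copy of `v`
beyond. -/
def shiftPerm (p : ℕ) (v : Equiv.Perm ℕ) : Equiv.Perm ℕ where
  toFun i := if i < p then i else v (i - p) + p
  invFun i := if i < p then i else v.symm (i - p) + p
  left_inv := by
    intro i
    by_cases h : i < p
    · simp [h]
    · have h2 : ¬ (v (i - p) + p < p) := by omega
      simp only [if_neg h, if_neg h2, Nat.add_sub_cancel, Equiv.symm_apply_apply]
      omega
  right_inv := by
    intro i
    by_cases h : i < p
    · simp [h]
    · have h2 : ¬ (v.symm (i - p) + p < p) := by omega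
      simp only [if_neg h, if_neg h2, Nat.add_sub_cancel, Equiv.apply_symm_apply]
      omega

/-- One step of the 0-Hecke product of two permutations: repeatedly peel left
descents off the second factor. The first argument is fuel (an upper bound for the
length of the second factor). -/
def heckeAux : ℕ → Equiv.Perm ℕ → Equiv.Perm ℕ → Equiv.Perm ℕ
  | 0, u, _ => u
  | fuel + 1, u, v =>
    if h : ∃ i, v.symm (i + 1) < v.symm i then
      heckeAux fuel (hstep u (Nat.find h)) (Equiv.swap (Nat.find h) (Nat.find h + 1) * v)
    else u

/-- 0-Hecke (Demazure) product of two permutations of `S_m`. -/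
def heckeMul (m : ℕ) (u v : Equiv.Perm ℕ) : Equiv.Perm ℕ := heckeAux (lenB m v) u v

/-- 0-Hecke (Demazure) product of a list of permutations of `S_m`. -/
def heckeList (m : ℕ) (l : List (Equiv.Perm ℕ)) : Equiv.Perm ℕ := l.foldl (heckeMul m) 1

/-- All pipe dreams on the `k × l` grid with Demazure product `v`. -/
def pipesFin (k l : ℕ) (v : Equiv.Perm ℕ) : Finset (Finset (ℕ × ℕ)) :=
  ((Finset.range k ×ˢ Finset.range l).powerset).filter fun P => demazure k l P = v

/-- All reduced pipe dreams on the `k × l` grid with Demazure product `v`. -/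
def rpipesFin (k l : ℕ) (v : Equiv.Perm ℕ) : Finset (Finset (ℕ × ℕ)) :=
  (pipesFin k l v).filter fun P => P.card = lenB (k + l) v

end QP

namespace QP

/-! ### The bipartite quiver block structure.

A bipartite type `A` quiver has source vertices `y_0, …, y_n` and sink vertices
`x_1, …, x_n` (indices increasing right-to-left), arrows `β_k : y_k → x_k` and
`α_k : y_{k-1} → x_k`.  Dimension vectors are recorded as `dx dy : ℕ → ℕ` (the
relevant values being `dx 1, …, dx n` and `dy 0, …, dy n`).

`d × d` grids carry the block structure with row blocks `y_0, …, y_n, x_n, …, x_1`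
and column blocks `x_n, …, x_1, y_0, …, y_n`; everything is 0-indexed. -/

def dX (n : ℕ) (dx : ℕ → ℕ) : ℕ := ∑ i ∈ Finset.Icc 1 n, dx i

def dY (n : ℕ) (dy : ℕ → ℕ) : ℕ := ∑ i ∈ Finset.range (n + 1), dy i

def dd (n : ℕ) (dx dy : ℕ → ℕ) : ℕ := dY n dy + dX n dx

/-- Row offset of the row block `y_j`. -/
def rowY (dy : ℕ → ℕ) (j : ℕ) : ℕ := ∑ i ∈ Finset.range j, dy i

/-- Column offset of the column block `x_k`. -/
def colX (n : ℕ) (dx : ℕ → ℕ) (k : ℕ) : ℕ := ∑ i ∈ Finset.Icc (k + 1) n, dx i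

/-- Row offset of the row block `x_k`. -/
def rowX (n : ℕ) (dx dy : ℕ → ℕ) (k : ℕ) : ℕ := dY n dy + colX n dx k

/-- Column offset of the column block `y_j`. -/
def colY (n : ℕ) (dx dy : ℕ → ℕ) (j : ℕ) : ℕ := dX n dx + rowY dy j

/-- The block `α_k`, at (row block `y_{k-1}`, column block `x_k`). -/
def alphaBlock (n : ℕ) (dx dy : ℕ → ℕ) (k : ℕ) : Finset (ℕ × ℕ) :=
  Finset.Ico (rowY dy (k - 1)) (rowY dy (k - 1) + dy (k - 1)) ×ˢ
    Finset.Ico (colX n dx k) (colX n dx k + dx k)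

/-- The block `β_k`, at (row block `y_k`, column block `x_k`). -/
def betaBlock (n : ℕ) (dx dy : ℕ → ℕ) (k : ℕ) : Finset (ℕ × ℕ) :=
  Finset.Ico (rowY dy k) (rowY dy k + dy k) ×ˢ
    Finset.Ico (colX n dx k) (colX n dx k + dx k)

/-- The snake region: the union of the blocks `α_k, β_k`, `1 ≤ k ≤ n`. -/
def snake (n : ℕ) (dx dy : ℕ → ℕ) : Finset (ℕ × ℕ) :=
  (Finset.Icc 1 n).biUnion fun k => alphaBlock n dx dy k ∪ betaBlock n dx dy k

/-- `P_*`: crosses at exactly the positions of the northwest `d_y × d_x` subgrid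
outside the snake region. -/
def Pstar (n : ℕ) (dx dy : ℕ → ℕ) : Finset (ℕ × ℕ) :=
  (Finset.range (dY n dy) ×ˢ Finset.range (dX n dx)) \ snake n dx dy

/-- `Pipes(v_0, v)`: pipe dreams on the `d × d` grid with Demazure product `v`, all
of whose crosses lie in the northwest `d_y × d_x` subgrid. -/
def pipesNW (n : ℕ) (dx dy : ℕ → ℕ) (v : Equiv.Perm ℕ) : Finset (Finset (ℕ × ℕ)) :=
  ((Finset.range (dY n dy) ×ˢ Finset.range (dX n dx)).powerset).filter fun P =>
    demazure (dd n dx dy) (dd n dx dy) P = v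

/-- `RPipes(v_0, v)`: the reduced members of `Pipes(v_0, v)`. -/
def rpipesNW (n : ℕ) (dx dy : ℕ → ℕ) (v : Equiv.Perm ℕ) : Finset (Finset (ℕ × ℕ)) :=
  (pipesNW n dx dy v).filter fun P => P.card = lenB (dd n dx dy) v

/-- The mini pipe dream `P_k`: restriction of `P` to the block `β_k`, in local
coordinates. -/
def miniB (n : ℕ) (dx dy : ℕ → ℕ) (P : Finset (ℕ × ℕ)) (k : ℕ) : Finset (ℕ × ℕ) :=
  (P ∩ betaBlock n dx dy k).image fun p => (p.1 - rowY dy k, p.2 - colX n dx k)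

/-- The mini pipe dream `P^k`: restriction of `P` to the block `α_k`, in local
coordinates. -/
def miniA (n : ℕ) (dx dy : ℕ → ℕ) (P : Finset (ℕ × ℕ)) (k : ℕ) : Finset (ℕ × ℕ) :=
  (P ∩ alphaBlock n dx dy k).image fun p => (p.1 - rowY dy (k - 1), p.2 - colX n dx k)

/-! ### Lacing diagrams and the group `S_𝐝`. -/

/-- Data of a lacing diagram: partial permutations `w_k` (of size `dy k × dx k`,
for the arrows `β_k`) and `w^k` (of size `dy (k-1) × dx k`, for the arrows `α_k`). -/
abbrev LaceData := (ℕ → Finset (ℕ × ℕ)) × (ℕ → Finset (ℕ × ℕ))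

/-- Elements of `S_𝐝 = ∏_k (S_{β_k} × S_{α_k})`: tuples `(v_k, v^k)_k` of
permutations, `v_k ∈ S_{dy k + dx k}` and `v^k ∈ S_{dy (k-1) + dx k}`. -/
abbrev SD := (ℕ → Equiv.Perm ℕ) × (ℕ → Equiv.Perm ℕ)

def IsLacingDiagram (n : ℕ) (dx dy : ℕ → ℕ) (L : LaceData) : Prop :=
  (∀ k, 1 ≤ k → k ≤ n →
    IsPartialPerm (dy k) (dx k) (L.1 k) ∧ IsPartialPerm (dy (k - 1)) (dx k) (L.2 k)) ∧
  (∀ k, k = 0 ∨ n < k → L.1 k = ∅ ∧ L.2 k = ∅)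

def InSD (n : ℕ) (dx dy : ℕ → ℕ) (x : SD) : Prop :=
  (∀ k, 1 ≤ k → k ≤ n →
    fixesFrom (dy k + dx k) (x.1 k) ∧ fixesFrom (dy (k - 1) + dx k) (x.2 k)) ∧
  (∀ k, k = 0 ∨ n < k → x.1 k = 1 ∧ x.2 k = 1)

/-- The completion map `𝔠 : Laces(𝐝) → S_𝐝`,
`(w_n, w^n, …) ↦ (c(w_n), c(rot(w^n)), …)`. -/
def cOp (n : ℕ) (dx dy : ℕ → ℕ) (L : LaceData) : SD :=
  (fun k => if 1 ≤ k ∧ k ≤ n then completion (dy k) (dx k) (L.1 k) else 1,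
   fun k => if 1 ≤ k ∧ k ≤ n then
      completion (dy (k - 1)) (dx k) (rotF (dy (k - 1)) (dx k) (L.2 k)) else 1)

/-- The truncation map `LD : S_𝐝 → Laces(𝐝)`,
`(v_k, v^k)_k ↦ (t_k(v_k), rot(t^k(v^k)))_k`. -/
def LDOp (n : ℕ) (dx dy : ℕ → ℕ) (x : SD) : LaceData :=
  (fun k => if 1 ≤ k ∧ k ≤ n then matrixOf (dy k) (dx k) (x.1 k) else ∅,
   fun k => if 1 ≤ k ∧ k ≤ n then
      rotF (dy (k - 1)) (dx k) (matrixOf (dy (k - 1)) (dx k) (x.2 k)) else ∅)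

/-- The operation `π` on pipe dreams:
`π(P) = (δ(P_n), δ(rot(P^n)), …, δ(P_1), δ(rot(P^1))) ∈ S_𝐝`. -/
def piOp (n : ℕ) (dx dy : ℕ → ℕ) (P : Finset (ℕ × ℕ)) : SD :=
  (fun k => if 1 ≤ k ∧ k ≤ n then demazure (dy k) (dx k) (miniB n dx dy P k) else 1,
   fun k => if 1 ≤ k ∧ k ≤ n then
      demazure (dy (k - 1)) (dx k) (rotF (dy (k - 1)) (dx k) (miniA n dx dy P k)) else 1)

/-- "Follow the pipes" for a single pipe dream on a `k × l` grid: the partial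
permutation matrix connecting the west wall to the north wall (double crossings of a
pair of pipes being ignored); concretely, the northwest `k × l` truncation of the
matrix of the Demazure product. -/
def followPipes (k l : ℕ) (P : Finset (ℕ × ℕ)) : Finset (ℕ × ℕ) :=
  matrixOf k l (demazure k l P)

/-- The pipes-to-laces operation `𝔴`. -/
def wOp (n : ℕ) (dx dy : ℕ → ℕ) (P : Finset (ℕ × ℕ)) : LaceData :=
  (fun k => if 1 ≤ k ∧ k ≤ n then followPipes (dy k) (dx k) (miniB n dx dy P k) else ∅,
   fun k => if 1 ≤ k ∧ k ≤ n then
      rotF (dy (k - 1)) (dx k)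
        (followPipes (dy (k - 1)) (dx k) (rotF (dy (k - 1)) (dx k) (miniA n dx dy P k)))
    else ∅)

end QP

namespace QP

/-! ### Laces and lace counts.

Columns of a lacing diagram are indexed left-to-right by `1, …, 2n+1`:
odd position `2m+1` carries the vertex `y_{n-m}`, even position `2m` the vertex
`x_{n-m+1}`. -/

/-- Number of dots in the column at position `p`. -/
def colSize (n : ℕ) (dx dy : ℕ → ℕ) (p : ℕ) : ℕ :=
  if p % 2 = 1 then dy (n - (p - 1) / 2) else dx (n - p / 2 + 1)

/-- The matching (partial permutation) between consecutive columns `p` and `p+1`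
of a lacing diagram. -/
def matchingAt (n : ℕ) (_dx _dy : ℕ → ℕ) (L : LaceData) (p : ℕ) : Finset (ℕ × ℕ) :=
  if p % 2 = 1 then L.1 (n - (p - 1) / 2) else transposeF (L.2 (n - p / 2 + 1))

/-- Composition of relations (partial permutations). -/
def compF (A B : Finset (ℕ × ℕ)) : Finset (ℕ × ℕ) :=
  ((A ×ˢ B).filter fun q => q.1.2 = q.2.1).image fun q => (q.1.1, q.2.2)

/-- Paths of the lacing diagram from column `u` to column `u + t`. -/
def pathF (n : ℕ) (dx dy : ℕ → ℕ) (L : LaceData) (u : ℕ) : ℕ → Finset (ℕ × ℕ)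
  | 0 => (Finset.range (colSize n dx dy u)).image fun i => (i, i)
  | t + 1 => compF (pathF n dx dy L u t) (matchingAt n dx dy L (u + t))

/-- Number of paths (strands) of the lacing diagram connecting column `u` to
column `v` (zero if out of range). -/
def pathCount (n : ℕ) (dx dy : ℕ → ℕ) (L : LaceData) (u v : ℕ) : ℕ :=
  if 1 ≤ u ∧ u ≤ v ∧ v ≤ 2 * n + 1 then (pathF n dx dy L u (v - u)).card else 0

/-- Number of laces with left endpoint in column `u` and right endpoint in column
`v` (by inclusion–exclusion on path counts). -/
def laceCount (n : ℕ) (dx dy : ℕ → ℕ) (L : LaceData) (u v : ℕ) : ℤ :=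
  (pathCount n dx dy L u v : ℤ) - pathCount n dx dy L (u - 1) v
    - pathCount n dx dy L u (v + 1) + pathCount n dx dy L (u - 1) (v + 1)

/-- Two lacing diagrams lie in the same `GL(𝐝)`-orbit iff they have the same number
of laces between any two pairs of columns. -/
def sameOrbit (n : ℕ) (dx dy : ℕ → ℕ) (L L' : LaceData) : Prop :=
  ∀ u v, laceCount n dx dy L u v = laceCount n dx dy L' u v

/-- `|w|`: the number of crossings in the extended lacing diagram of `w`, namely
`Σ_k ℓ(c(w_k)) + Σ_k ℓ(c(rot(w^k)))`. -/
def lacingLength (n : ℕ) (dx dy : ℕ → ℕ) (L : LaceData) : ℕ :=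
  (∑ k ∈ Finset.Icc 1 n, lenB (dy k + dx k) (completion (dy k) (dx k) (L.1 k))) +
  ∑ k ∈ Finset.Icc 1 n,
    lenB (dy (k - 1) + dx k)
      (completion (dy (k - 1)) (dx k) (rotF (dy (k - 1)) (dx k) (L.2 k)))

/-- `W(Ω)`: minimal lacing diagrams in the orbit of `L₀`. -/
def MinimalLacings (n : ℕ) (dx dy : ℕ → ℕ) (L₀ : LaceData) : Set LaceData :=
  {w | IsLacingDiagram n dx dy w ∧ sameOrbit n dx dy w L₀ ∧
    ∀ w', IsLacingDiagram n dx dy w' → sameOrbit n dx dy w' L₀ →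
      lacingLength n dx dy w ≤ lacingLength n dx dy w'}

/-! ### The Zelevinsky permutation. -/

/-- The set of rows of the row block of the vertex at position `p`. -/
def vertRowBlock (n : ℕ) (dx dy : ℕ → ℕ) (p : ℕ) : Finset ℕ :=
  if p % 2 = 1 then
    Finset.Ico (rowY dy (n - (p - 1) / 2)) (rowY dy (n - (p - 1) / 2) + dy (n - (p - 1) / 2))
  else
    Finset.Ico (rowX n dx dy (n - p / 2 + 1)) (rowX n dx dy (n - p / 2 + 1) + dx (n - p / 2 + 1))

/-- The set of columns of the column block of the vertex at position `p`. -/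
def vertColBlock (n : ℕ) (dx dy : ℕ → ℕ) (p : ℕ) : Finset ℕ :=
  if p % 2 = 1 then
    Finset.Ico (colY n dx dy (n - (p - 1) / 2)) (colY n dx dy (n - (p - 1) / 2) + dy (n - (p - 1) / 2))
  else
    Finset.Ico (colX n dx (n - p / 2 + 1)) (colX n dx (n - p / 2 + 1) + dx (n - p / 2 + 1))

/-- Number of 1s of the permutation matrix of `v` in the rows `R` and columns `C`. -/
def onesIn (v : Equiv.Perm ℕ) (R C : Finset ℕ) : ℕ := (R.filter fun i => v i ∈ C).card

/-- `v` is the (bipartite) Zelevinsky permutation of the orbit of the lacing diagram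
`L`: conditions (Z1), (Z2) on block entry counts and (Z3) northwest-to-southeast
arrangement in each block row and block column. -/
def IsZelevinsky (n : ℕ) (dx dy : ℕ → ℕ) (L : LaceData) (v : Equiv.Perm ℕ) : Prop :=
  fixesFrom (dd n dx dy) v ∧
  -- (Z1)
  (∀ pu pv, 1 ≤ pu → pu ≤ pv → pv ≤ 2 * n + 1 →
    (onesIn v (vertRowBlock n dx dy pu) (vertColBlock n dx dy pv) : ℤ)
      = laceCount n dx dy L pu pv) ∧
  -- (Z2)
  (∀ p, 1 ≤ p → p + 1 ≤ 2 * n + 1 →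
    onesIn v (vertRowBlock n dx dy (p + 1)) (vertColBlock n dx dy p)
      = (matchingAt n dx dy L p).card) ∧
  -- (Z3), block rows
  (∀ p, 1 ≤ p → p ≤ 2 * n + 1 → ∀ i ∈ vertRowBlock n dx dy p, ∀ i' ∈ vertRowBlock n dx dy p,
    i < i' →
    (∃ q, 1 ≤ q ∧ q ≤ 2 * n + 1 ∧ v i ∈ vertColBlock n dx dy q ∧ v i' ∈ vertColBlock n dx dy q) →
    v i < v i') ∧
  -- (Z3), block columns
  (∀ p, 1 ≤ p → p ≤ 2 * n + 1 → ∀ j ∈ vertColBlock n dx dy p, ∀ j' ∈ vertColBlock n dx dy p,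
    j < j' →
    (∃ q, 1 ≤ q ∧ q ≤ 2 * n + 1 ∧ v.symm j ∈ vertRowBlock n dx dy q ∧
      v.symm j' ∈ vertRowBlock n dx dy q) →
    v.symm j < v.symm j')

/-- `v_*`: the Zelevinsky permutation of the whole representation space, i.e. the
Zelevinsky permutation of an orbit, of minimal length (the dense orbit). -/
def IsStarZelevinsky (n : ℕ) (dx dy : ℕ → ℕ) (v : Equiv.Perm ℕ) : Prop :=
  (∃ L, IsLacingDiagram n dx dy L ∧ IsZelevinsky n dx dy L v) ∧
  ∀ L' v', IsLacingDiagram n dx dy L' → IsZelevinsky n dx dy L' v' →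
    lenB (dd n dx dy) v ≤ lenB (dd n dx dy) v'

/-! ### `X_Ω`, pipe networks, and moves. -/

/-- `X_Ω = {π(P) : P ∈ Pipes(v_0, v(Ω))}` (here parametrized by `v(Ω)`). -/
def XOmega (n : ℕ) (dx dy : ℕ → ℕ) (vZ : Equiv.Perm ℕ) : Set SD :=
  {x | ∃ P ∈ pipesNW n dx dy vZ, piOp n dx dy P = x}

/-- `X_Ω^red = {π(P) : P ∈ RPipes(v_0, v(Ω))}`. -/
def XOmegaRed (n : ℕ) (dx dy : ℕ → ℕ) (vZ : Equiv.Perm ℕ) : Set SD :=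
  {x | ∃ P ∈ rpipesNW n dx dy vZ, piOp n dx dy P = x}

/-- Pipe networks for a lacing diagram `w`: pipe dreams on the `d_y × d_x` grid
containing `P_*` with `P_k ∈ Pipes(w_k)` and `rot(P^k) ∈ Pipes(w^k)` for all `k`. -/
def PipeNet (n : ℕ) (dx dy : ℕ → ℕ) (w : LaceData) : Set (Finset (ℕ × ℕ)) :=
  {P | (∀ p ∈ P, p.1 < dY n dy ∧ p.2 < dX n dx) ∧ Pstar n dx dy ⊆ P ∧
    ∀ k, 1 ≤ k → k ≤ n →
      demazure (dy k) (dx k) (miniB n dx dy P k) = completion (dy k) (dx k) (w.1 k) ∧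
      demazure (dy (k - 1)) (dx k) (rotF (dy (k - 1)) (dx k) (miniA n dx dy P k))
        = completion (dy (k - 1)) (dx k) (w.2 k)}

/-- PN-reduced pipe networks: each mini pipe dream is a reduced pipe dream of the
corresponding partial permutation. -/
def RPipeNet (n : ℕ) (dx dy : ℕ → ℕ) (w : LaceData) : Set (Finset (ℕ × ℕ)) :=
  {P | P ∈ PipeNet n dx dy w ∧ ∀ k, 1 ≤ k → k ≤ n →
    (miniB n dx dy P k).card = lenB (dy k + dx k) (completion (dy k) (dx k) (w.1 k)) ∧
    (rotF (dy (k - 1)) (dx k) (miniA n dx dy P k)).card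
      = lenB (dy (k - 1) + dx k) (completion (dy (k - 1)) (dx k) (w.2 k))}

def updB (z : SD) (i : ℕ) (p : Equiv.Perm ℕ) : SD := (Function.update z.1 i p, z.2)

def updA (z : SD) (i : ℕ) (p : Equiv.Perm ℕ) : SD := (z.1, Function.update z.2 i p)

/-- The three tuples `(…, τ_k v_i, v^i, …)`, `(…, v_i, rot(τ_{k'} rot(v^i)), …)`,
`(…, τ_k v_i, rot(τ_{k'} rot(v^i)), …)` obtained from the base tuple `z` at a middle
column `x_i` and middle dots `k, k+1` (0-indexed; `k' = dy (i-1) + k`). -/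
def tripleX (dx dy : ℕ → ℕ) (z : SD) (i k : ℕ) : Set SD :=
  {updB z i (Equiv.swap k (k + 1) * z.1 i),
   updA z i (rotPerm (dy (i - 1) + dx i)
     (Equiv.swap (dy (i - 1) + k) (dy (i - 1) + k + 1) * rotPerm (dy (i - 1) + dx i) (z.2 i))),
   updA (updB z i (Equiv.swap k (k + 1) * z.1 i)) i
     (rotPerm (dy (i - 1) + dx i)
       (Equiv.swap (dy (i - 1) + k) (dy (i - 1) + k + 1) * rotPerm (dy (i - 1) + dx i) (z.2 i)))}

/-- The three tuples `(…, v^{i+1}, v_i τ_l, …)`, `(…, rot(rot(v^{i+1}) τ_{l'}), v_i, …)`,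
`(…, rot(rot(v^{i+1}) τ_{l'}), v_i τ_l, …)` obtained from the base tuple `z` at a middle
column `y_i` and middle dots `l, l+1` (0-indexed; `l' = dx (i+1) + l`). -/
def tripleY (dx dy : ℕ → ℕ) (z : SD) (i l : ℕ) : Set SD :=
  {updB z i (z.1 i * Equiv.swap l (l + 1)),
   updA z (i + 1) (rotPerm (dy i + dx (i + 1))
     (rotPerm (dy i + dx (i + 1)) (z.2 (i + 1)) *
       Equiv.swap (dx (i + 1) + l) (dx (i + 1) + l + 1))),
   updA (updB z i (z.1 i * Equiv.swap l (l + 1))) (i + 1)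
     (rotPerm (dy i + dx (i + 1))
       (rotPerm (dy i + dx (i + 1)) (z.2 (i + 1)) *
         Equiv.swap (dx (i + 1) + l) (dx (i + 1) + l + 1)))}

/-- The transposition moves on `S_𝐝` (the moves of the transposition-move lemma,
interchanging any two of the tuples of types 1(a), 1(b), 1(c), respectively
2(a), 2(b), 2(c), under the stated ascent conditions). -/
def Move14Rel (n : ℕ) (dx dy : ℕ → ℕ) (u u' : SD) : Prop :=
  (∃ z : SD, ∃ i k, 1 ≤ i ∧ i ≤ n ∧ k + 1 < dx i ∧
    (z.1 i).symm k < (z.1 i).symm (k + 1) ∧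
    (rotPerm (dy (i - 1) + dx i) (z.2 i)).symm (dy (i - 1) + k)
      < (rotPerm (dy (i - 1) + dx i) (z.2 i)).symm (dy (i - 1) + k + 1) ∧
    u ∈ tripleX dx dy z i k ∧ u' ∈ tripleX dx dy z i k ∧ u ≠ u') ∨
  (∃ z : SD, ∃ i l, 1 ≤ i ∧ i + 1 ≤ n ∧ l + 1 < dy i ∧
    z.1 i l < z.1 i (l + 1) ∧
    z.2 (i + 1) (dx (i + 1) + l) < z.2 (i + 1) (dx (i + 1) + l + 1) ∧
    u ∈ tripleY dx dy z i l ∧ u' ∈ tripleY dx dy z i l ∧ u ≠ u')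

/-- The K-theoretic lacing diagram moves, at the level of extended lacing diagrams
(elements of `S_𝐝`): local moves at a middle column (`x_i` or `y_i`) through two
adjacent non-virtual middle dots, where the two strands through the middle dots are
uncrossed on both sides in the base configuration and at least one of their endpoints
in each outer column is non-virtual; any two of the three resulting configurations
(crossed left / crossed both / crossed right) are interchanged. -/
def KMoveRel (n : ℕ) (dx dy : ℕ → ℕ) (u u' : SD) : Prop :=
  (∃ z : SD, ∃ i k, 1 ≤ i ∧ i ≤ n ∧ k + 1 < dx i ∧
    (z.1 i).symm k < (z.1 i).symm (k + 1) ∧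
    (rotPerm (dy (i - 1) + dx i) (z.2 i)).symm (dy (i - 1) + k)
      < (rotPerm (dy (i - 1) + dx i) (z.2 i)).symm (dy (i - 1) + k + 1) ∧
    ((z.1 i).symm k < dy i ∨ (z.1 i).symm (k + 1) < dy i) ∧
    (dx i ≤ (rotPerm (dy (i - 1) + dx i) (z.2 i)).symm (dy (i - 1) + k) ∨
      dx i ≤ (rotPerm (dy (i - 1) + dx i) (z.2 i)).symm (dy (i - 1) + k + 1)) ∧
    u ∈ tripleX dx dy z i k ∧ u' ∈ tripleX dx dy z i k ∧ u ≠ u') ∨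
  (∃ z : SD, ∃ i l, 1 ≤ i ∧ i + 1 ≤ n ∧ l + 1 < dy i ∧
    z.1 i l < z.1 i (l + 1) ∧
    rotPerm (dy i + dx (i + 1)) (z.2 (i + 1)) (dx (i + 1) + l)
      < rotPerm (dy i + dx (i + 1)) (z.2 (i + 1)) (dx (i + 1) + l + 1) ∧
    (z.1 i l < dx i ∨ z.1 i (l + 1) < dx i) ∧
    (dy i ≤ rotPerm (dy i + dx (i + 1)) (z.2 (i + 1)) (dx (i + 1) + l) ∨
      dy i ≤ rotPerm (dy i + dx (i + 1)) (z.2 (i + 1)) (dx (i + 1) + l + 1)) ∧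
    u ∈ tripleY dx dy z i l ∧ u' ∈ tripleY dx dy z i l ∧ u ≠ u')

/-- Extended diagrams reachable from (the completion of) a minimal lacing diagram by
K-theoretic lacing diagram moves. -/
def KWext (n : ℕ) (dx dy : ℕ → ℕ) (L₀ : LaceData) : Set SD :=
  {x | ∃ w ∈ MinimalLacings n dx dy L₀,
    Relation.ReflTransGen (KMoveRel n dx dy) (cOp n dx dy w) x}

/-- `KW(Ω)`: the K-theoretic lacing diagrams for the orbit of `L₀`. -/
def KW (n : ℕ) (dx dy : ℕ → ℕ) (L₀ : LaceData) : Set LaceData :=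
  LDOp n dx dy '' KWext n dx dy L₀

end QP

namespace QP

/-! ### Alphabets and Schubert / Grothendieck polynomials. -/

/-- Index of the row block `y_j` containing row `r` (for `r < d_y`). -/
def yRowIdx (n : ℕ) (dy : ℕ → ℕ) (r : ℕ) : ℕ :=
  WithBot.unbotD 0 (((Finset.range (n + 1)).filter fun j => rowY dy j ≤ r).max)

/-- Index of the row block `x_k` containing row `r` (for `d_y ≤ r < d`). -/
def xRowIdx (n : ℕ) (dx dy : ℕ → ℕ) (r : ℕ) : ℕ :=
  WithTop.untopD 0 (((Finset.Icc 1 n).filter fun k => rowX n dx dy k ≤ r).min)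

/-- Index of the column block `x_k` containing column `c` (for `c < d_x`). -/
def xColIdx (n : ℕ) (dx : ℕ → ℕ) (c : ℕ) : ℕ :=
  WithTop.untopD 0 (((Finset.Icc 1 n).filter fun k => colX n dx k ≤ c).min)

/-- Index of the column block `y_j` containing column `c` (for `d_x ≤ c < d`). -/
def yColIdx (n : ℕ) (dx dy : ℕ → ℕ) (c : ℕ) : ℕ :=
  WithBot.unbotD 0 (((Finset.range (n + 1)).filter fun j => colY n dx dy j ≤ c).max)

variable {K : Type*}

/-- The variable attached to row `r` of the `d × d` grid: the concatenated alphabet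
`(𝐭, 𝐬) = (𝐭^0, …, 𝐭^n, 𝐬^n, …, 𝐬^1)`.  Here `t k i` is the variable `t^k_{i+1}`
and `s k j` is the variable `s^k_{j+1}`. -/
def rowVar [CommRing K] (n : ℕ) (dx dy : ℕ → ℕ) (t s : ℕ → ℕ → K) (r : ℕ) : K :=
  if r < dY n dy then t (yRowIdx n dy r) (r - rowY dy (yRowIdx n dy r))
  else s (xRowIdx n dx dy r) (r - rowX n dx dy (xRowIdx n dx dy r))

/-- The variable attached to column `c` of the `d × d` grid: the concatenated
alphabet `(𝐬, 𝐭) = (𝐬^n, …, 𝐬^1, 𝐭^0, …, 𝐭^n)`. -/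
def colVar [CommRing K] (n : ℕ) (dx dy : ℕ → ℕ) (t s : ℕ → ℕ → K) (c : ℕ) : K :=
  if c < dX n dx then s (xColIdx n dx c) (c - colX n dx (xColIdx n dx c))
  else t (yColIdx n dx dy c) (c - colY n dx dy (yColIdx n dx dy c))

/-- The double Schubert polynomial `𝔖_v(a; b)` (pipe dream formula, on a `k × l`
grid). -/
def schubert [CommRing K] (k l : ℕ) (v : Equiv.Perm ℕ) (a b : ℕ → K) : K :=
  ∑ P ∈ rpipesFin k l v, ∏ p ∈ P, (a p.1 - b p.2)

/-- The double Grothendieck polynomial `𝔊_v(a; b)` (pipe dream formula, on a `k × l`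
grid). -/
def grothendieck [Field K] (k l : ℕ) (v : Equiv.Perm ℕ) (a b : ℕ → K) : K :=
  ∑ P ∈ pipesFin k l v,
    (-1 : K) ^ ((P.card : ℤ) - (lenB (k + l) v : ℤ)) * ∏ p ∈ P, (1 - a p.1 / b p.2)

/-- `𝔖_𝐰(𝐭; 𝐬) = ∏_k 𝔖_{w_k}(𝐭^k; 𝐬^k) ⬝ ∏_k 𝔖_{rot(w^k)}(𝐭̃^{k-1}; 𝐬̃^k)` for a lacing
diagram `𝐰` (Schubert polynomials of partial permutations being those of their
minimal-length completions). -/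
def schubertLace [CommRing K] (n : ℕ) (dx dy : ℕ → ℕ) (w : LaceData)
    (t s : ℕ → ℕ → K) : K :=
  (∏ k ∈ Finset.Icc 1 n,
    schubert (dy k) (dx k) (completion (dy k) (dx k) (w.1 k))
      (fun i => t k i) (fun j => s k j)) *
  ∏ k ∈ Finset.Icc 1 n,
    schubert (dy (k - 1)) (dx k)
      (completion (dy (k - 1)) (dx k) (rotF (dy (k - 1)) (dx k) (w.2 k)))
      (fun i => t (k - 1) (dy (k - 1) - 1 - i)) (fun j => s k (dx k - 1 - j))

/-- `𝔊_𝐰(𝐭; 𝐬) = ∏_k 𝔊_{w_k}(𝐭^k; 𝐬^k) ⬝ ∏_k 𝔊_{rot(w^k)}(𝐭̃^{k-1}; 𝐬̃^k)`. -/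
def grothendieckLace [Field K] (n : ℕ) (dx dy : ℕ → ℕ) (w : LaceData)
    (t s : ℕ → ℕ → K) : K :=
  (∏ k ∈ Finset.Icc 1 n,
    grothendieck (dy k) (dx k) (completion (dy k) (dx k) (w.1 k))
      (fun i => t k i) (fun j => s k j)) *
  ∏ k ∈ Finset.Icc 1 n,
    grothendieck (dy (k - 1)) (dx k)
      (completion (dy (k - 1)) (dx k) (rotF (dy (k - 1)) (dx k) (w.2 k)))
      (fun i => t (k - 1) (dy (k - 1) - 1 - i)) (fun j => s k (dx k - 1 - j))

/-! ### Data for the Demazure-product factorization of the Zelevinsky permutation. -/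

/-- `ε^k`: Demazure product of the pipe dream with crosses at all positions strictly
north of the block `α_k`. -/
def epsA (n : ℕ) (dx dy : ℕ → ℕ) (k : ℕ) : Equiv.Perm ℕ :=
  demazure (dY n dy) (dX n dx)
    (Finset.range (rowY dy (k - 1)) ×ˢ Finset.Ico (colX n dx k) (colX n dx k + dx k))

/-- `ε_k`: Demazure product of the pipe dream with crosses at all positions strictly
south of the block `β_k` (inside the `d_y × d_x` grid). -/
def epsB (n : ℕ) (dx dy : ℕ → ℕ) (k : ℕ) : Equiv.Perm ℕ :=
  demazure (dY n dy) (dX n dx)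
    (Finset.Ico (rowY dy k + dy k) (dY n dy) ×ˢ Finset.Ico (colX n dx k) (colX n dx k + dx k))

/-- `θ^k`: Demazure product of the pipe dream with crosses at all positions strictly
west of the block `α_k`. -/
def thA (n : ℕ) (dx dy : ℕ → ℕ) (k : ℕ) : Equiv.Perm ℕ :=
  demazure (dY n dy) (dX n dx)
    (Finset.Ico (rowY dy (k - 1)) (rowY dy (k - 1) + dy (k - 1)) ×ˢ Finset.range (colX n dx k))

/-- `θ_k`: Demazure product of the pipe dream with crosses at all positions strictly
east of the block `β_k` (inside the `d_y × d_x` grid). -/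
def thB (n : ℕ) (dx dy : ℕ → ℕ) (k : ℕ) : Equiv.Perm ℕ :=
  demazure (dY n dy) (dX n dx)
    (Finset.Ico (rowY dy k) (rowY dy k + dy k) ×ˢ Finset.Ico (colX n dx k + dx k) (dX n dx))

/-- `a_k = Σ_{i>k} dx i + Σ_{i<k-1} dy i`. -/
def aOff (n : ℕ) (dx dy : ℕ → ℕ) (k : ℕ) : ℕ := colX n dx k + rowY dy (k - 1)

/-- `b_k = Σ_{i>k} dx i + Σ_{i<k} dy i`. -/
def bOff (n : ℕ) (dx dy : ℕ → ℕ) (k : ℕ) : ℕ := colX n dx k + rowY dy k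

/-- `w_k = 1^{b_k} × v_k`. -/
def wShB (n : ℕ) (dx dy : ℕ → ℕ) (x : SD) (k : ℕ) : Equiv.Perm ℕ :=
  shiftPerm (bOff n dx dy k) (x.1 k)

/-- `w^k = 1^{a_k} × rot((v^k)⁻¹)`. -/
def wShA (n : ℕ) (dx dy : ℕ → ℕ) (x : SD) (k : ℕ) : Equiv.Perm ℕ :=
  shiftPerm (aOff n dx dy k) (rotPerm (dy (k - 1) + dx k) (x.2 k)⁻¹)

/-- The factor list `(w^1 w_1 ε_1)(ε^2 w^2 w_2 ε_2) ⋯ (ε^n w^n w_n)` (the factors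
`ε^1` and `ε_n` being the identity). -/
def factorList2 (n : ℕ) (dx dy : ℕ → ℕ) (x : SD) : List (Equiv.Perm ℕ) :=
  ((List.range' 1 n).map fun k =>
    [epsA n dx dy k, wShA n dx dy x k, wShB n dx dy x k, epsB n dx dy k]).flatten

/-- The factor list `(w^1 θ^1)(w_1 w^2 θ^2)(θ_2 w_2 w^3 θ^3) ⋯ (θ_{n-1} w_{n-1} w^n)(θ_n w_n)`
(the factor `θ_1` being the identity). -/
def factorList3 (n : ℕ) (dx dy : ℕ → ℕ) (x : SD) : List (Equiv.Perm ℕ) :=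
  [wShA n dx dy x 1, thA n dx dy 1] ++
    ((List.range' 1 n).map fun k =>
      [thB n dx dy k, wShB n dx dy x k] ++
        (if k = n then [] else [wShA n dx dy x (k + 1), thA n dx dy (k + 1)])).flatten

end QP


namespace QP

/-! ### Auxiliary lemmas -/


lemma perm_lt {M : ℕ} {v : Equiv.Perm ℕ} (hv : fixesFrom M v) {x : ℕ} (hx : x < M) :
    v x < M := by
  by_contra h
  push_neg at h
  have := hv _ h
  have := v.injective this
  omega

lemma fixesFrom_symm {M : ℕ} {v : Equiv.Perm ℕ} (hv : fixesFrom M v) :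
    fixesFrom M v.symm := by
  intro i hi
  have := hv i hi
  conv_lhs => rw [← this]
  exact v.symm_apply_apply i

lemma hstep_descent (u : Equiv.Perm ℕ) (a : ℕ) : (hstep u a) (a + 1) < (hstep u a) a := by
  unfold hstep
  split_ifs with h
  · simpa [Equiv.Perm.mul_apply] using h
  · have hne : u a ≠ u (a + 1) := fun he => by
      have := u.injective he; omega
    omega

lemma hstep_ne (u : Equiv.Perm ℕ) (a : ℕ) : hstep u a = u ∨ hstep u a = u * Equiv.swap a (a+1) := by
  unfold hstep; split_ifs <;> simp

lemma swap_mono {p a b : ℕ} (h : a < b) (hne : ¬(a = p ∧ b = p + 1)) :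
    (Equiv.swap p (p + 1)) a < (Equiv.swap p (p + 1)) b := by
  rw [Equiv.swap_apply_def, Equiv.swap_apply_def]
  split_ifs <;> omega

lemma mul_swap_symm_apply (u : Equiv.Perm ℕ) (a b x : ℕ) :
    (u * Equiv.swap a b).symm x = Equiv.swap a b (u.symm x) := by
  have : (u * Equiv.swap a b) = (Equiv.swap a b).trans u := rfl
  rw [this, Equiv.symm_trans_apply, Equiv.symm_swap]

lemma hstep_symm_persist (u : Equiv.Perm ℕ) (a q : ℕ) (h : u.symm (q + 1) < u.symm q) :
    (hstep u a).symm (q + 1) < (hstep u a).symm q := by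
  unfold hstep
  split_ifs with hasc
  · rw [mul_swap_symm_apply, mul_swap_symm_apply]
    apply swap_mono h
    rintro ⟨h1, h2⟩
    have e1 : u a = q + 1 := by rw [← h1]; exact u.apply_symm_apply _
    have e2 : u (a + 1) = q := by rw [← h2]; exact u.apply_symm_apply _
    omega
  · exact h

lemma fold_symm_persist (L : List ℕ) (u : Equiv.Perm ℕ) (q : ℕ)
    (h : u.symm (q + 1) < u.symm q) :
    (L.foldl hstep u).symm (q + 1) < (L.foldl hstep u).symm q := by
  induction L generalizing u with
  | nil => exact h
  | cons a L ih => exact ih _ (hstep_symm_persist u a q h)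

lemma fold_descent_ge (L : List ℕ) (u : Equiv.Perm ℕ) (i : ℕ)
    (hL : ∀ b ∈ L, i ≤ b) (h : ∃ p, i ≤ p ∧ u (p + 1) < u p) :
    ∃ p, i ≤ p ∧ (L.foldl hstep u) (p + 1) < (L.foldl hstep u) p := by
  induction L generalizing u with
  | nil => exact h
  | cons a L ih =>
    apply ih (hstep u a) (fun b hb => hL b (List.mem_cons_of_mem _ hb))
    rcases hstep_ne u a with he | he
    · rw [he]; exact h
    · exact ⟨a, hL a (List.mem_cons_self), hstep_descent u a⟩

/-- discrete IVT for descents -/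
lemma exists_desc (f : ℕ → ℕ) (c d : ℕ) (hcd : c < d) (hf : f d < f c) :
    ∃ q, c ≤ q ∧ q < d ∧ f (q + 1) < f q := by
  by_contra hcon
  push_neg at hcon
  have key : ∀ e, c ≤ e → e ≤ d → f c ≤ f e := by
    intro e
    induction e with
    | zero => exact fun h1 _ => Nat.le_of_eq (congrArg f (by omega))
    | succ n ih =>
      intro h1 h2
      rcases Nat.lt_or_ge c (n + 1) with hc | hc
      · have e1 := ih (by omega) (by omega)
        have e2 := hcon n (by omega) (by omega)
        omega
      · exact Nat.le_of_eq (congrArg f (by omega))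
  have := key d (by omega) le_rfl
  omega

/-! ## the Q invariant -/

def Q (r t : ℕ) (u : Equiv.Perm ℕ) : Prop :=
  ∀ x, (x ≤ t → x ≤ u x + r) ∧ x ≤ u x + r + 1

lemma Qstep {r t : ℕ} {u : Equiv.Perm ℕ} (hQ : Q r t u) {a : ℕ} (ha : a < t) :
    Q r a (hstep u a) := by
  unfold hstep
  split_ifs with hasc
  · intro x
    have hsa : (u * Equiv.swap a (a + 1)) x
        = if x = a then u (a + 1) else if x = a + 1 then u a else u x := by
      rw [Equiv.Perm.mul_apply, Equiv.swap_apply_def]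
      split_ifs <;> rfl
    rw [hsa]
    have h1 := hQ a
    have h2 := hQ (a + 1)
    have h3 := hQ x
    split_ifs <;> exact ⟨fun _ => by omega, by omega⟩

  · intro x
    have h3 := hQ x
    constructor
    · intro hx; exact (h3.1 (by omega))
    · exact h3.2

lemma QFold {r : ℕ} : ∀ (L : List ℕ) (u : Equiv.Perm ℕ) (t : ℕ),
    L.Pairwise (fun a b => b < a) → (∀ b ∈ L, b < t) → Q r t u →
    ∃ t', t' ∈ t :: L ∧ Q r t' (L.foldl hstep u) := by
  intro L
  induction L with
  | nil => intro u t _ _ hQ; exact ⟨t, List.mem_singleton.2 rfl, hQ⟩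
  | cons a L ih =>
    intro u t hpw hlt hQ
    obtain ⟨t', ht', hQ'⟩ := ih (hstep u a) a (List.Pairwise.of_cons hpw |>.imp (fun h => h))
      (fun b hb => (List.pairwise_cons.1 hpw).1 b hb)
      (Qstep hQ (hlt a (List.mem_cons_self)))
    refine ⟨t', ?_, hQ'⟩
    rcases List.mem_cons.1 ht' with h | h
    · exact List.mem_cons_of_mem _ (h ▸ List.mem_cons_self)
    · exact List.mem_cons_of_mem _ (List.mem_cons_of_mem _ h)

/-! ## word structure -/

lemma pairwise_filterMap' {α β : Type*} (f : α → Option β) {R : α → α → Prop}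
    {S : β → β → Prop}
    (h : ∀ a b, R a b → ∀ x, f a = some x → ∀ y, f b = some y → S x y) :
    ∀ l : List α, l.Pairwise R → (l.filterMap f).Pairwise S := by
  intro l hl
  induction hl with
  | nil => simp
  | @cons a l ha hl ih =>
    rw [List.filterMap_cons]
    cases hfa : f a with
    | none => exact ih
    | some x =>
      refine List.Pairwise.cons ?_ ih
      intro y hy
      obtain ⟨b, hb, hfb⟩ := List.mem_filterMap.1 hy
      exact h a b (ha b hb) x hfa y hfb

def rowW (L : ℕ) (P : Finset (ℕ × ℕ)) (i : ℕ) : List ℕ :=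
  (List.range L).reverse.filterMap fun j => if (i, j) ∈ P then some (i + j) else none

lemma pipeWord_eq_rowW (K L : ℕ) (P : Finset (ℕ × ℕ)) :
    pipeWord K L P = (List.range K).flatMap (rowW L P) := rfl

lemma mem_rowW {L : ℕ} {P : Finset (ℕ × ℕ)} {i a : ℕ} :
    a ∈ rowW L P i ↔ ∃ j, j < L ∧ (i, j) ∈ P ∧ a = i + j := by
  simp only [rowW, List.mem_filterMap, List.mem_reverse, List.mem_range]
  constructor
  · rintro ⟨j, hj, hsome⟩
    by_cases hp : (i, j) ∈ P
    · rw [if_pos hp] at hsome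
      exact ⟨j, hj, hp, (Option.some_injective _ hsome).symm⟩
    · rw [if_neg hp] at hsome; cases hsome
  · rintro ⟨j, hj, hp, rfl⟩; exact ⟨j, hj, by rw [if_pos hp]⟩

lemma rowW_pairwise (L : ℕ) (P : Finset (ℕ × ℕ)) (i : ℕ) :
    (rowW L P i).Pairwise (fun a b => b < a) := by
  have hrev : (List.range L).reverse.Pairwise (fun a b : ℕ => b < a) :=
    List.pairwise_reverse.2 (by simpa using List.pairwise_lt_range (n := L))
  refine pairwise_filterMap' _ ?_ _ hrev
  · intro a b hab x hx y hy
    by_cases hpa : (i, a) ∈ P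
    · rw [if_pos hpa] at hx
      by_cases hpb : (i, b) ∈ P
      · rw [if_pos hpb] at hy
        have := Option.some_injective _ hx
        have := Option.some_injective _ hy
        omega
      · rw [if_neg hpb] at hy; cases hy
    · rw [if_neg hpa] at hx; cases hx

lemma pairwise_split {a : ℕ} {l : List ℕ} (hl : l.Pairwise (fun x y => y < x))
    (ha : a ∈ l) :
    ∃ G R, l = G ++ a :: R ∧ (∀ b ∈ G, a < b) ∧ (∀ b ∈ R, b < a) := by
  obtain ⟨G, R, rfl⟩ := List.append_of_mem ha
  rw [List.pairwise_append] at hl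
  obtain ⟨h1, h2, h3⟩ := hl
  exact ⟨G, R, rfl, fun b hb => h3 b hb a (List.mem_cons_self),
    fun b hb => (List.pairwise_cons.1 h2).1 b hb⟩

lemma flatMap_congr' {α β : Type*} {f g : α → List β} :
    ∀ {l : List α}, (∀ a ∈ l, f a = g a) → l.flatMap f = l.flatMap g := by
  intro l
  induction l with
  | nil => intro _; rfl
  | cons a l ih =>
    intro h
    rw [List.flatMap_cons, List.flatMap_cons, h a (List.mem_cons_self),
      ih (fun b hb => h b (List.mem_cons_of_mem _ hb))]

lemma pipeWord_split {K L : ℕ} {P : Finset (ℕ × ℕ)} {i : ℕ} (hi : i < K) :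
    ∃ Wsuf : List ℕ,
      pipeWord K L P = (List.range i).flatMap (rowW L P) ++ rowW L P i ++ Wsuf ∧
      ∀ b ∈ Wsuf, i ≤ b := by
  have hK : K = (i + 1) + (K - i - 1) := by omega
  refine ⟨((List.range (K - i - 1)).map ((i+1) + ·)).flatMap (rowW L P), ?_, ?_⟩
  · have hr : List.range K = (List.range i ++ [i]) ++ (List.range (K - i - 1)).map ((i+1) + ·) := by
      conv_lhs => rw [hK]
      rw [List.range_add, List.range_succ]
    rw [pipeWord_eq_rowW, hr, List.flatMap_append, List.flatMap_append]
    simp [List.append_assoc]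
  · intro b hb
    obtain ⟨i', hi', hbi'⟩ := List.mem_flatMap.1 hb
    obtain ⟨x, _, rfl⟩ := List.mem_map.1 hi'
    obtain ⟨j', _, _, rfl⟩ := mem_rowW.1 hbi'
    omega

lemma rows_bound (L : ℕ) (P : Finset (ℕ × ℕ)) :
    ∀ i x, x ≤ (hword ((List.range i).flatMap (rowW L P))) x + i := by
  intro i
  induction i with
  | zero => intro x; simp [hword]
  | succ i ih =>
    intro x
    rw [List.range_succ, List.flatMap_append, List.flatMap_cons, List.flatMap_nil,
      List.append_nil]
    unfold hword at ih ⊢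
    rw [List.foldl_append]
    set u0 := (((List.range i).flatMap (rowW L P)).foldl hstep 1) with hu0
    have hQ0 : Q i (i + L + 1) u0 := fun y => ⟨fun _ => ih y, le_trans (ih y) (by omega)⟩
    obtain ⟨t', _, hQ'⟩ := QFold (rowW L P i) u0 (i + L + 1) (rowW_pairwise L P i)
      (fun b hb => by obtain ⟨j, hj, _, rfl⟩ := mem_rowW.1 hb; omega) hQ0
    have := (hQ' x).2
    omega

lemma cross_descents {K L : ℕ} {P : Finset (ℕ × ℕ)} {i j : ℕ} (hij : (i, j) ∈ P)
    (hiK : i < K) (hjL : j < L) :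
    (∃ p, i ≤ p ∧ (demazure K L P) (p + 1) < (demazure K L P) p) ∧
    (∃ q, j ≤ q ∧ (demazure K L P).symm (q + 1) < (demazure K L P).symm q) := by
  obtain ⟨Wsuf, hsplit, hWsuf⟩ := pipeWord_split (L := L) (P := P) hiK
  have hmem : i + j ∈ rowW L P i := mem_rowW.2 ⟨j, hjL, hij, rfl⟩
  obtain ⟨G, R, hGR, hG, hR⟩ := pairwise_split (rowW_pairwise L P i) hmem
  set u0 := hword ((List.range i).flatMap (rowW L P)) with hu0
  set u1 := G.foldl hstep u0 with hu1
  set u2 := hstep u1 (i + j) with hu2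
  have hword_eq : demazure K L P = (R ++ Wsuf).foldl hstep u2 := by
    unfold demazure hword
    rw [hsplit, hGR]
    simp only [List.foldl_append, List.foldl_cons]
    rfl
  have h0 : ∀ x, x ≤ u0 x + i := rows_bound L P i
  have hQ0 : Q i (i + L) u0 := fun y => ⟨fun _ => h0 y, le_trans (h0 y) (by omega)⟩
  have hGsub : ∀ b ∈ G, b ∈ rowW L P i := by
    intro b hb; rw [hGR]; exact List.mem_append_left _ hb
  have hGpw : G.Pairwise (fun a b => b < a) :=
    (List.pairwise_append.1 (hGR ▸ rowW_pairwise L P i)).1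
  obtain ⟨t', ht', hQ1⟩ := QFold G u0 (i + L) hGpw
    (fun b hb => by obtain ⟨j', hj', _, rfl⟩ := mem_rowW.1 (hGsub b hb); omega) hQ0
  rw [← hu1] at hQ1
  have ht'gt : i + j < t' := by
    rcases List.mem_cons.1 ht' with h | h
    · omega
    · exact hG t' h
  have hu1a : j ≤ u1 (i + j) := by have := (hQ1 (i + j)).1 (by omega); omega
  have hu1b : j + 1 ≤ u1 (i + j + 1) := by have := (hQ1 (i + j + 1)).1 (by omega); omega
  have hdes : u2 (i + j + 1) < u2 (i + j) := hstep_descent u1 (i + j)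
  have hu2b : j ≤ u2 (i + j + 1) := by
    rw [hu2]; unfold hstep
    split_ifs with h
    · rw [Equiv.Perm.mul_apply, Equiv.swap_apply_right]; exact hu1a
    · omega
  constructor
  · rw [hword_eq]
    apply fold_descent_ge
    · intro b hb
      rcases List.mem_append.1 hb with h | h
      · have hbr : b ∈ rowW L P i := by
          rw [hGR]; exact List.mem_append_right _ (List.mem_cons_of_mem _ h)
        obtain ⟨j', _, _, rfl⟩ := mem_rowW.1 hbr; omega
      · exact hWsuf b h
    · exact ⟨i + j, by omega, hdes⟩
  · obtain ⟨q, hq1, hq2, hq3⟩ := exists_desc (fun y => u2.symm y)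
      (u2 (i + j + 1)) (u2 (i + j)) hdes (by simp)
    refine ⟨q, by omega, ?_⟩
    rw [hword_eq]
    exact fold_symm_persist _ _ _ hq3

/-! ## grid growing -/

lemma rowW_congr {L L2 : ℕ} {P : Finset (ℕ × ℕ)} {i : ℕ} (hL : L ≤ L2)
    (hP : ∀ p ∈ P, p.2 < L) : rowW L2 P i = rowW L P i := by
  unfold rowW
  have h2 : L2 = L + (L2 - L) := by omega
  have hr : List.range L2 = List.range L ++ (List.range (L2 - L)).map (L + ·) := by
    conv_lhs => rw [h2, List.range_add]
  rw [hr, List.reverse_append, List.filterMap_append]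
  have hnil : (((List.range (L2 - L)).map (L + ·)).reverse.filterMap
      fun j => if (i, j) ∈ P then some (i + j) else none) = [] := by
    rw [List.filterMap_eq_nil_iff]
    intro a ha
    rw [List.mem_reverse] at ha
    obtain ⟨x, _, rfl⟩ := List.mem_map.1 ha
    have hnp : (i, L + x) ∉ P := fun hc => by have h : L + x < L := hP _ hc; omega
    rw [if_neg hnp]
  rw [hnil, List.nil_append]

lemma rowW_nil {K L : ℕ} {P : Finset (ℕ × ℕ)} {i : ℕ} (hiK : K ≤ i)
    (hP : ∀ p ∈ P, p.1 < K) : rowW L P i = [] := by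
  unfold rowW
  rw [List.filterMap_eq_nil_iff]
  intro a _
  have hnp : (i, a) ∉ P := fun hc => by have h : i < K := hP _ hc; omega
  rw [if_neg hnp]

lemma pipeWord_grow {K L K2 L2 : ℕ} {P : Finset (ℕ × ℕ)}
    (hP : ∀ p ∈ P, p.1 < K ∧ p.2 < L) (hK : K ≤ K2) (hL : L ≤ L2) :
    pipeWord K2 L2 P = pipeWord K L P := by
  rw [pipeWord_eq_rowW, pipeWord_eq_rowW]
  have h2 : K2 = K + (K2 - K) := by omega
  have hr : List.range K2 = List.range K ++ (List.range (K2 - K)).map (K + ·) := by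
    conv_lhs => rw [h2, List.range_add]
  rw [hr, List.flatMap_append]
  have hnil : ((List.range (K2 - K)).map (K + ·)).flatMap (rowW L2 P) = [] := by
    rw [List.flatMap_eq_nil_iff]
    intro i hi
    obtain ⟨x, _, rfl⟩ := List.mem_map.1 hi
    exact rowW_nil (by omega) (fun p hp => (hP p hp).1)
  rw [hnil, List.append_nil]
  exact flatMap_congr' (fun i _ => rowW_congr hL (fun p hp => (hP p hp).2))

lemma demazure_grow {K L K2 L2 : ℕ} {P : Finset (ℕ × ℕ)}
    (hP : ∀ p ∈ P, p.1 < K ∧ p.2 < L) (hK : K ≤ K2) (hL : L ≤ L2) :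
    demazure K2 L2 P = demazure K L P := by
  unfold demazure
  rw [pipeWord_grow hP hK hL]

lemma pipes_congr {v : Equiv.Perm ℕ} {K L K2 L2 : ℕ}
    (hd : ∀ p, v (p + 1) < v p → p < K ∧ p < K2)
    (hi : ∀ q, v.symm (q + 1) < v.symm q → q < L ∧ q < L2) :
    pipesFin K L v = pipesFin K2 L2 v := by
  have main : ∀ (A B A2 B2 : ℕ), (∀ p, v (p + 1) < v p → p < A2) →
      (∀ q, v.symm (q + 1) < v.symm q → q < B2) →
      ∀ P ∈ pipesFin A B v, P ∈ pipesFin A2 B2 v := by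
    intro A B A2 B2 hdA hiB P hP
    simp only [pipesFin, Finset.mem_filter, Finset.mem_powerset] at hP ⊢
    obtain ⟨hsub, hdem⟩ := hP
    have hbounds : ∀ p ∈ P, p.1 < A ∧ p.2 < B := by
      intro p hp
      have := hsub hp
      simpa [Finset.mem_product] using this
    have hbounds2 : ∀ p ∈ P, p.1 < A2 ∧ p.2 < B2 := by
      intro p hp
      have hp' : (p.1, p.2) ∈ P := by rwa [Prod.mk.eta]
      obtain ⟨hrow, hcol⟩ := cross_descents hp' (hbounds p hp).1 (hbounds p hp).2
      rw [hdem] at hrow hcol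
      obtain ⟨pp, hpp, hdes⟩ := hrow
      obtain ⟨qq, hqq, hdes'⟩ := hcol
      exact ⟨lt_of_le_of_lt hpp (hdA pp hdes), lt_of_le_of_lt hqq (hiB qq hdes')⟩
    have hbm : ∀ p ∈ P, p.1 < min A A2 ∧ p.2 < min B B2 := by
      intro p hp
      exact ⟨lt_min (hbounds p hp).1 (hbounds2 p hp).1,
        lt_min (hbounds p hp).2 (hbounds2 p hp).2⟩
    constructor
    · intro p hp
      simp only [Finset.mem_product, Finset.mem_range]
      exact hbounds2 p hp
    · rw [← hdem]
      unfold demazure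
      rw [pipeWord_grow hbm (min_le_right _ _) (min_le_right _ _),
        ← pipeWord_grow hbm (min_le_left _ _) (min_le_left _ _)]
  apply Finset.Subset.antisymm <;> intro P hP
  · exact main K L K2 L2 (fun p h => (hd p h).2) (fun q h => (hi q h).2) P hP
  · exact main K2 L2 K L (fun p h => (hd p h).1) (fun q h => (hi q h).1) P hP

lemma descent_lt {M : ℕ} {v : Equiv.Perm ℕ} (hv : fixesFrom M v) {p : ℕ}
    (h : v (p + 1) < v p) : p + 2 ≤ M := by
  by_contra hc
  push_neg at hc
  rcases Nat.lt_or_ge p M with hp | hp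
  · have hM : M = p + 1 := by omega
    have h1 : v (p + 1) = p + 1 := hv _ (by omega)
    have h2 : v p < M := perm_lt hv (by omega)
    omega
  · have h1 : v p = p := hv _ hp
    have h2 : v (p + 1) = p + 1 := hv _ (by omega)
    omega

/-! ## length lemmas -/

lemma fixesFrom_inv {N : ℕ} {v : Equiv.Perm ℕ} (hv : fixesFrom N v) :
    fixesFrom N v⁻¹ := by
  intro i hi
  have h := hv i hi
  conv_lhs => rw [← h]
  exact v.symm_apply_apply i

lemma lenB_stab {m N : ℕ} {v : Equiv.Perm ℕ} (hv : fixesFrom m v) (h : m ≤ N) :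
    lenB N v = lenB m v := by
  unfold lenB
  congr 1
  ext ⟨a, b⟩
  simp only [Finset.mem_filter, Finset.mem_product, Finset.mem_range]
  constructor
  · rintro ⟨⟨ha, hb⟩, hab, hv'⟩
    have hbm : b < m := by
      by_contra hbm
      push_neg at hbm
      have h1 : v b = b := hv _ hbm
      rcases Nat.lt_or_ge a m with ham | ham
      · have := perm_lt hv ham; omega
      · have := hv _ ham; omega
    exact ⟨⟨by omega, hbm⟩, hab, hv'⟩
  · rintro ⟨⟨ha, hb⟩, hab, hv'⟩
    exact ⟨⟨by omega, by omega⟩, hab, hv'⟩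

lemma lenB_inv {N : ℕ} {v : Equiv.Perm ℕ} (hv : fixesFrom N v) :
    lenB N v⁻¹ = lenB N v := by
  unfold lenB
  have himg : ((Finset.range N ×ˢ Finset.range N).filter
        fun p => p.1 < p.2 ∧ v⁻¹ p.2 < v⁻¹ p.1)
      = ((Finset.range N ×ˢ Finset.range N).filter
        fun p => p.1 < p.2 ∧ v p.2 < v p.1).image (fun pr => (v pr.2, v pr.1)) := by
    ext ⟨c, d⟩
    simp only [Finset.mem_filter, Finset.mem_product, Finset.mem_range,
      Finset.mem_image, Prod.exists, Prod.mk.injEq]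
    constructor
    · rintro ⟨⟨hc, hd⟩, hcd, hinv⟩
      refine ⟨v⁻¹ d, v⁻¹ c, ⟨⟨perm_lt (fixesFrom_inv hv) hd, perm_lt (fixesFrom_inv hv) hc⟩,
        hinv, ?_⟩, ?_, ?_⟩
      · rw [(show ∀ x, v (v⁻¹ x) = x from fun x => v.apply_symm_apply x), (show ∀ x, v (v⁻¹ x) = x from fun x => v.apply_symm_apply x)]; exact hcd
      · rw [(show ∀ x, v (v⁻¹ x) = x from fun x => v.apply_symm_apply x)]
      · rw [(show ∀ x, v (v⁻¹ x) = x from fun x => v.apply_symm_apply x)]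
    · rintro ⟨a, b, ⟨⟨ha, hb⟩, hab, hvba⟩, rfl, rfl⟩
      refine ⟨⟨perm_lt hv hb, perm_lt hv ha⟩, hvba, ?_⟩
      rw [(show ∀ x, v⁻¹ (v x) = x from fun x => v.symm_apply_apply x), (show ∀ x, v⁻¹ (v x) = x from fun x => v.symm_apply_apply x)]
      exact hab
  rw [himg, Finset.card_image_of_injective]
  intro pr qr hpq
  simp only [Prod.mk.injEq] at hpq
  have h1 := v.injective hpq.1
  have h2 := v.injective hpq.2
  exact Prod.ext h2 h1

lemma swap_lt_bound {p x N : ℕ} (hp : p + 1 < N) (hx : x < N) :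
    Equiv.swap p (p + 1) x < N := by
  rw [Equiv.swap_apply_def]
  split_ifs <;> omega

lemma lenB_mul_swap {N : ℕ} {v : Equiv.Perm ℕ} {p : ℕ} (hp : p + 1 < N)
    (hd : v (p + 1) < v p) :
    lenB N (v * Equiv.swap p (p + 1)) + 1 = lenB N v := by
  unfold lenB
  set s := Equiv.swap p (p + 1) with hs
  set T' := ((Finset.range N ×ˢ Finset.range N).filter
    fun q => q.1 < q.2 ∧ (v * s) q.2 < (v * s) q.1) with hT'
  set T := ((Finset.range N ×ˢ Finset.range N).filter
    fun q => q.1 < q.2 ∧ v q.2 < v q.1) with hT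
  have hss : ∀ x, s (s x) = x := fun x => Equiv.swap_apply_self _ _ _
  have happ : ∀ x, (v * s) x = v (s x) := fun x => rfl
  have hTT : T = insert (p, p + 1) (T'.image (fun pr => (s pr.1, s pr.2))) := by
    ext ⟨a, b⟩
    simp only [hT, hT', Finset.mem_insert, Finset.mem_image, Finset.mem_filter,
      Finset.mem_product, Finset.mem_range, Prod.exists, Prod.mk.injEq]
    constructor
    · rintro ⟨⟨ha, hb⟩, hab, hvba⟩
      by_cases hpp : a = p ∧ b = p + 1
      · exact Or.inl ⟨hpp.1, hpp.2⟩
      · refine Or.inr ⟨s a, s b, ⟨⟨swap_lt_bound hp ha, swap_lt_bound hp hb⟩,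
          swap_mono hab hpp, ?_⟩, hss a, hss b⟩
        rw [happ, happ, hss, hss]
        exact hvba
    · rintro (⟨rfl, rfl⟩ | ⟨c, d, ⟨⟨hc, hd⟩, hcd, hvdc⟩, rfl, rfl⟩)
      · exact ⟨⟨by omega, hp⟩, by omega, hd⟩
      · rw [happ, happ] at hvdc
        have hne : ¬(c = p ∧ d = p + 1) := by
          rintro ⟨rfl, rfl⟩
          rw [Equiv.swap_apply_left] at hvdc
          rw [Equiv.swap_apply_right] at hvdc
          omega
        exact ⟨⟨swap_lt_bound hp hc, swap_lt_bound hp hd⟩, swap_mono hcd hne, hvdc⟩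
  have hnotmem : (p, p + 1) ∉ T'.image (fun pr => (s pr.1, s pr.2)) := by
    rw [Finset.mem_image]
    rintro ⟨⟨c, d⟩, hcd, heq⟩
    simp only [Prod.mk.injEq] at heq
    have hc : c = s p := by rw [← heq.1, hss]
    have hd : d = s (p + 1) := by rw [← heq.2, hss]
    rw [Equiv.swap_apply_left] at hc
    rw [Equiv.swap_apply_right] at hd
    simp only [hT', Finset.mem_filter] at hcd
    have := hcd.2.1
    omega
  have hinj : Function.Injective (fun pr : ℕ × ℕ => (s pr.1, s pr.2)) := by
    intro pr qr hpq
    simp only [Prod.mk.injEq] at hpq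
    exact Prod.ext (s.injective hpq.1) (s.injective hpq.2)
  rw [hTT, Finset.card_insert_of_notMem hnotmem, Finset.card_image_of_injective _ hinj]

/-! ## existence of completions -/

def blockSwap (k l : ℕ) : Equiv.Perm ℕ where
  toFun x := if x < k then x + l else if x < k + l then x - k else x
  invFun y := if y < l then y + k else if y < k + l then y - l else y
  left_inv := by intro x; dsimp only; split_ifs <;> omega
  right_inv := by intro y; dsimp only; split_ifs <;> omega

lemma exists_completion : ∀ (n k l : ℕ) (w : Finset (ℕ × ℕ)), w.card = n →
    IsPartialPerm k l w → ∃ v, IsCompletion k l w v := by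
  intro n
  induction n with
  | zero =>
    intro k l w hn hw
    have hw0 : w = ∅ := Finset.card_eq_zero.1 hn
    subst hw0
    refine ⟨blockSwap k l, ?_, ?_⟩
    · intro i hi j hj
      simp only [Finset.notMem_empty, iff_false]
      intro he
      have hb : blockSwap k l i = i + l := by
        show (if i < k then i + l else if i < k + l then i - k else i) = i + l
        rw [if_pos hi]
      omega
    · intro x hx
      show (if x < k then x + l else if x < k + l then x - k else x) = x
      rw [if_neg (by omega), if_neg (by omega)]
  | succ n ih =>
    intro k l w hn hw
    have hne : w.Nonempty := by rw [← Finset.card_pos, hn]; omega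
    obtain ⟨⟨i0, j0⟩, hij⟩ := hne
    have hi0 : i0 < k := (hw.1 _ hij).1
    have hj0 : j0 < l := (hw.1 _ hij).2
    set w' := w.erase (i0, j0) with hw'
    have hw'pp : IsPartialPerm k l w' :=
      ⟨fun p hp => hw.1 p (Finset.mem_of_mem_erase hp),
       fun p hp q hq h => hw.2.1 p (Finset.mem_of_mem_erase hp) q (Finset.mem_of_mem_erase hq) h,
       fun p hp q hq h => hw.2.2 p (Finset.mem_of_mem_erase hp) q (Finset.mem_of_mem_erase hq) h⟩
    obtain ⟨v', hv'⟩ := ih k l w' (by rw [hw', Finset.card_erase_of_mem hij, hn]; rfl) hw'pp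
    set y := v' i0 with hy0
    have hy : l ≤ y := by
      by_contra hyl
      push_neg at hyl
      have h1 : (i0, y) ∈ w' := (hv'.1 i0 hi0 y hyl).1 rfl
      have h2 : (i0, y) ∈ w := Finset.mem_of_mem_erase h1
      have heq : (i0, y) = (i0, j0) := hw.2.1 _ h2 _ hij rfl
      rw [heq] at h1
      exact (Finset.notMem_erase _ _) h1
    have hyb : y < k + l := perm_lt hv'.2 (by omega)
    refine ⟨Equiv.swap y j0 * v', ?_, ?_⟩
    · intro i hi j hj
      by_cases hii : i = i0
      · have hv : (Equiv.swap y j0 * v') i = j0 := by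
          rw [Equiv.Perm.mul_apply, hii, ← hy0, Equiv.swap_apply_left]
        rw [hv]
        constructor
        · rintro rfl; rw [hii]; exact hij
        · intro hmem
          have h6 := hw.2.1 _ hmem _ hij (by rw [hii])
          simp only [Prod.mk.injEq] at h6
          exact h6.2.symm
      · have h1 : v' i ≠ y := fun he => hii (v'.injective (by rw [he, hy0]))
        have h2 : v' i ≠ j0 := by
          intro he
          have h3 : (i, j0) ∈ w' := (hv'.1 i hi j0 hj0).1 he
          have h4 := hw.2.2 _ (Finset.mem_of_mem_erase h3) _ hij rfl
          simp only [Prod.mk.injEq] at h4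
          exact hii h4.1
        have hv : (Equiv.swap y j0 * v') i = v' i := by
          rw [Equiv.Perm.mul_apply, Equiv.swap_apply_of_ne_of_ne h1 h2]
        rw [hv, hv'.1 i hi j hj, hw', Finset.mem_erase]
        constructor
        · exact fun h => h.2
        · intro h
          refine ⟨?_, h⟩
          simp only [ne_eq, Prod.mk.injEq, not_and]
          intro h5; exact absurd h5 hii
    · intro x hx
      rw [Equiv.Perm.mul_apply, hv'.2 x hx,
        Equiv.swap_apply_of_ne_of_ne (by omega) (by omega)]

lemma completion_spec {k l : ℕ} {w : Finset (ℕ × ℕ)} (hw : IsPartialPerm k l w) :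
    IsCompletion k l w (completion k l w) ∧
    ∀ u, IsCompletion k l w u →
      lenB (k + l) (completion k l w) ≤ lenB (k + l) u := by
  have hminex : ∃ v, IsCompletion k l w v ∧
      ∀ u, IsCompletion k l w u → lenB (k + l) v ≤ lenB (k + l) u := by
    obtain ⟨v0, hv0⟩ := exists_completion _ k l w rfl hw
    have Hex : ∃ nn, ∃ u, IsCompletion k l w u ∧ lenB (k + l) u = nn :=
      ⟨lenB (k + l) v0, v0, hv0, rfl⟩
    obtain ⟨u, hu, hulen⟩ := Nat.find_spec Hex
    refine ⟨u, hu, fun u' hu' => ?_⟩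
    rw [hulen]
    exact Nat.find_min' Hex ⟨u', hu', rfl⟩
  unfold completion
  rw [dif_pos hminex]
  exact hminex.choose_spec


/-- Let `w` be a `k × l` partial permutation matrix and let
`c(w) ∈ S_m` be its minimal-length completion (`m` being the smallest possible
dimension).  Then extension of pipe dreams by elbow tiles identifies
`RPipes(w) = RPipes(c(w))` and `Pipes(w) = Pipes(c(w))`; moreover for any extension
of `c(w)` by the identity permutation to `S_{m'}` (`m' ≥ m`), also
`RPipes(w) = RPipes(v)` and `Pipes(w) = Pipes(v)`.  (In this encoding a pipe dream is
its finite set of crosses, so extension by elbow tiles is the canonical inclusion.) -/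
theorem pipes_of_completion (k l : ℕ) (w : Finset (ℕ × ℕ)) (hw : IsPartialPerm k l w)
    (m : ℕ) (hm : fixesFrom m (completion k l w))
    (hmin : ∀ m', fixesFrom m' (completion k l w) → m ≤ m') :
    rpipesFin k l (completion k l w) = rpipesFin m m (completion k l w) ∧
    pipesFin k l (completion k l w) = pipesFin m m (completion k l w) ∧
    ∀ m', m ≤ m' →
      rpipesFin k l (completion k l w) = rpipesFin m' m' (completion k l w) ∧
      pipesFin k l (completion k l w) = pipesFin m' m' (completion k l w) := by
  obtain ⟨hcomp, hminlen⟩ := completion_spec hw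
  set v := completion k l w with hv
  have hfixkl : fixesFrom (k + l) v := hcomp.2
  have hmkl : m ≤ k + l := hmin _ hfixkl
  have hdk : ∀ p, v (p + 1) < v p → p < k := by
    intro p hdes
    by_contra hpk
    push_neg at hpk
    have hpl : p + 2 ≤ k + l := descent_lt hfixkl hdes
    set v2 := v * Equiv.swap p (p + 1) with hv2
    have hv2comp : IsCompletion k l w v2 := by
      constructor
      · intro i hi j hj
        have he : v2 i = v i := by
          rw [hv2, Equiv.Perm.mul_apply,
            Equiv.swap_apply_of_ne_of_ne (by omega) (by omega)]
        rw [he]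
        exact hcomp.1 i hi j hj
      · intro x hx
        rw [hv2, Equiv.Perm.mul_apply,
          Equiv.swap_apply_of_ne_of_ne (by omega) (by omega)]
        exact hfixkl x hx
    have h1 := hminlen v2 hv2comp
    have h2 := lenB_mul_swap (v := v) (show p + 1 < k + l by omega) hdes
    rw [← hv2] at h2
    omega
  have hdl : ∀ q, v.symm (q + 1) < v.symm q → q < l := by
    intro q hdes
    by_contra hql
    push_neg at hql
    have hdes' : v⁻¹ (q + 1) < v⁻¹ q := hdes
    have hfv : fixesFrom (k + l) v⁻¹ := fixesFrom_inv hfixkl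
    have hq2 : q + 2 ≤ k + l := descent_lt hfv hdes'
    set v2 := Equiv.swap q (q + 1) * v with hv2
    have hv2comp : IsCompletion k l w v2 := by
      constructor
      · intro i hi j hj
        by_cases hvi : v i < l
        · have he : v2 i = v i := by
            rw [hv2, Equiv.Perm.mul_apply,
              Equiv.swap_apply_of_ne_of_ne (by omega) (by omega)]
          rw [he]
          exact hcomp.1 i hi j hj
        · push_neg at hvi
          have h1 : v2 i ≠ j := by
            rw [hv2, Equiv.Perm.mul_apply, Equiv.swap_apply_def]
            split_ifs <;> omega
          have h2 : (i, j) ∉ w := fun hc => by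
            have := (hcomp.1 i hi j hj).2 hc
            omega
          simp [h1, h2]
      · intro x hx
        rw [hv2, Equiv.Perm.mul_apply, hfixkl x hx,
          Equiv.swap_apply_of_ne_of_ne (by omega) (by omega)]
    have hlen : lenB (k + l) v2 + 1 = lenB (k + l) v := by
      have hfix2 : fixesFrom (k + l) v2 := hv2comp.2
      have e1 : lenB (k + l) v2 = lenB (k + l) v2⁻¹ := (lenB_inv hfix2).symm
      have e2 : v2⁻¹ = v⁻¹ * Equiv.swap q (q + 1) := by
        rw [hv2, mul_inv_rev, Equiv.swap_inv]
      have e3 := lenB_mul_swap (v := v⁻¹) (show q + 1 < k + l by omega) hdes'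
      have e4 : lenB (k + l) v⁻¹ = lenB (k + l) v := lenB_inv hfixkl
      rw [e1, e2]
      omega
    have := hminlen v2 hv2comp
    omega
  have hdm : ∀ p, v (p + 1) < v p → p + 2 ≤ m := fun p h => descent_lt hm h
  have him : ∀ q, v.symm (q + 1) < v.symm q → q + 2 ≤ m := by
    intro q h
    have h' : v⁻¹ (q + 1) < v⁻¹ q := h
    exact descent_lt (fixesFrom_inv hm) h'
  have hP : ∀ m', m ≤ m' → pipesFin k l v = pipesFin m' m' v := by
    intro m' hm'
    apply pipes_congr
    · intro p h
      exact ⟨hdk p h, by have := hdm p h; omega⟩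
    · intro q h
      exact ⟨hdl q h, by have := him q h; omega⟩
  have hlen' : ∀ m', m ≤ m' → lenB (m' + m') v = lenB (k + l) v := by
    intro m' hm'
    rw [lenB_stab hm (show m ≤ m' + m' by omega),
      lenB_stab hm (show m ≤ k + l by omega)]
  have hR : ∀ m', m ≤ m' → rpipesFin k l v = rpipesFin m' m' v := by
    intro m' hm'
    unfold rpipesFin
    rw [hP m' hm', hlen' m' hm']
  exact ⟨hR m le_rfl, hP m le_rfl, fun m' h => ⟨hR m' h, hP m' h⟩⟩


end QP
end
end

section
/- Every pipe dream P ∈ Pipes(v_0, v(Ω)) contains P_* as a subset; that is, P has a cross tile in every position of the northwest d_y×d_x subgrid lying outside the snake region. -/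
open scoped Classical

noncomputable section

namespace QP
/-! ### Auxiliary lemmas on 0-Hecke folds of reading words. -/

section HeckeAux

open Equiv List

lemma hstep_eq_mul (u : Equiv.Perm ℕ) (a : ℕ) :
    hstep u a = u * (if u a < u (a + 1) then Equiv.swap a (a + 1) else 1) := by
  unfold hstep; split_ifs <;> simp

lemma foldl_hstep_apply_of_ne (l : List ℕ) (u : Equiv.Perm ℕ) (p : ℕ)
    (h : ∀ a ∈ l, p ≠ a ∧ p ≠ a + 1) : (l.foldl hstep u) p = u p := by
  induction l generalizing u with
  | nil => rfl
  | cons a l ih =>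
    have h1 := h a (List.mem_cons_self)
    have hrest : ∀ b ∈ l, p ≠ b ∧ p ≠ b + 1 := fun b hb => h b (List.mem_cons_of_mem a hb)
    rw [List.foldl_cons, ih _ hrest]
    unfold hstep
    split_ifs with hc
    · rw [Equiv.Perm.mul_apply, Equiv.swap_apply_of_ne_of_ne h1.1 h1.2]
    · rfl

lemma foldl_hstep_exists_sigma (l : List ℕ) (u : Equiv.Perm ℕ) (B : ℕ)
    (h : ∀ a ∈ l, B ≤ a) :
    ∃ σ : Equiv.Perm ℕ, l.foldl hstep u = u * σ ∧ ∀ p, p < B → σ p = p := by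
  induction l generalizing u with
  | nil => exact ⟨1, by simp, fun p _ => rfl⟩
  | cons a l ih =>
    have ha : B ≤ a := h a (List.mem_cons_self)
    obtain ⟨σ, hσ, hfix⟩ := ih (hstep u a) (fun b hb => h b (List.mem_cons_of_mem a hb))
    rw [List.foldl_cons, hσ, hstep_eq_mul]
    refine ⟨(if u a < u (a + 1) then Equiv.swap a (a + 1) else 1) * σ, by group, ?_⟩
    intro p hp
    have hpa : p ≠ a := by omega
    have hpa1 : p ≠ a + 1 := by omega
    rw [Equiv.Perm.mul_apply, hfix p hp]
    split_ifs with hc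
    · exact Equiv.swap_apply_of_ne_of_ne hpa hpa1
    · rfl

lemma sigma_ge_of_fix {σ : Equiv.Perm ℕ} {B : ℕ} (hfix : ∀ p, p < B → σ p = p)
    {q : ℕ} (hq : B ≤ q) : B ≤ σ q := by
  by_contra hlt
  push_neg at hlt
  have := hfix (σ q) hlt
  have : σ (σ q) = σ q := this
  have h2 : σ q = q := σ.injective this
  omega

lemma foldl_hstep_lt (l : List ℕ) (u : Equiv.Perm ℕ) (B : ℕ)
    (hl : ∀ a ∈ l, a + 1 < B) (hu : ∀ p, p < B → u p < B) :
    ∀ p, p < B → (l.foldl hstep u) p < B := by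
  induction l generalizing u with
  | nil => exact hu
  | cons a l ih =>
    have ha : a + 1 < B := hl a (List.mem_cons_self)
    refine ih (hstep u a) (fun b hb => hl b (List.mem_cons_of_mem a hb)) ?_
    intro p hp
    unfold hstep
    split_ifs with hc
    · rw [Equiv.Perm.mul_apply]
      by_cases h1 : p = a
      · rw [h1, Equiv.swap_apply_left]; exact hu _ (by omega)
      by_cases h2 : p = a + 1
      · rw [h2, Equiv.swap_apply_right]; exact hu _ (by omega)
      · rw [Equiv.swap_apply_of_ne_of_ne h1 h2]; exact hu _ hp
    · exact hu _ hp

/-- Processing a full descending run of letters `s + C - 1, …, s + 1, s`. -/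
lemma foldl_hstep_run (C : ℕ) : ∀ (s : ℕ) (u : Equiv.Perm ℕ),
    (∀ i, i < C → u (s + i) < u (s + C)) →
    ((((List.range C).reverse.map (s + ·)).foldl hstep u) s = u (s + C)) ∧
    (∀ i, i < C → (((List.range C).reverse.map (s + ·)).foldl hstep u) (s + i + 1) = u (s + i)) ∧
    (∀ p, p < s ∨ s + C < p → (((List.range C).reverse.map (s + ·)).foldl hstep u) p = u p) := by
  induction C with
  | zero =>
    intro s u _
    refine ⟨?_, fun i hi => by omega, fun p _ => rfl⟩
    simp only [List.range_zero, List.reverse_nil, List.map_nil, List.foldl_nil, Nat.add_zero]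
  | succ c ih =>
    intro s u h
    have hlist : ((List.range (c+1)).reverse.map (s + ·))
        = (s + c) :: ((List.range c).reverse.map (s + ·)) := by
      rw [List.range_succ, List.reverse_append]; simp
    have hasc : u (s + c) < u (s + c + 1) := by
      have := h c (by omega)
      rwa [show s + (c+1) = s + c + 1 by omega] at this
    have hstep1 : hstep u (s + c) = u * Equiv.swap (s + c) (s + c + 1) := by
      unfold hstep; rw [if_pos hasc]
    set u₁ := u * Equiv.swap (s + c) (s + c + 1) with hu₁
    have hu₁top : u₁ (s + c) = u (s + c + 1) := by
      rw [hu₁, Equiv.Perm.mul_apply, Equiv.swap_apply_left]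
    have hu₁top' : u₁ (s + c + 1) = u (s + c) := by
      rw [hu₁, Equiv.Perm.mul_apply, Equiv.swap_apply_right]
    have hu₁other : ∀ p, p ≠ s + c → p ≠ s + c + 1 → u₁ p = u p := by
      intro p h1 h2
      rw [hu₁, Equiv.Perm.mul_apply, Equiv.swap_apply_of_ne_of_ne h1 h2]
    have hcond : ∀ i, i < c → u₁ (s + i) < u₁ (s + c) := by
      intro i hi
      rw [hu₁top, hu₁other (s + i) (by omega) (by omega)]
      have := h i (by omega)
      rwa [show s + (c+1) = s + c + 1 by omega] at this
    obtain ⟨c1, c2, c3⟩ := ih s u₁ hcond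
    rw [hlist, List.foldl_cons, hstep1]
    refine ⟨?_, ?_, ?_⟩
    · rw [c1, hu₁top, show s + (c+1) = s + c + 1 by omega]
    · intro i hi
      rcases Nat.lt_or_ge i c with hiC | hiC
      · rw [c2 i hiC, hu₁other (s + i) (by omega) (by omega)]
      · have hiC' : i = c := by omega
        rw [hiC', c3 (s + c + 1) (by omega), hu₁top']
    · intro p hp
      have hp' : p < s ∨ s + c < p := by omega
      rw [c3 p hp', hu₁other p (by omega) (by omega)]

end HeckeAux

section RowWords

/-- The reading word of row `r` of a pipe dream on the `d × d` grid. -/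
def rowWord (P : Finset (ℕ × ℕ)) (d r : ℕ) : List ℕ :=
  (List.range d).reverse.filterMap fun j => if (r, j) ∈ P then some (r + j) else none

/-- Demazure product of the first `t` rows. -/
def stage (P : Finset (ℕ × ℕ)) (d t : ℕ) : Equiv.Perm ℕ :=
  hword ((List.range t).flatMap (rowWord P d))

lemma pipeWord_eq_flatMap (P : Finset (ℕ × ℕ)) (d : ℕ) :
    pipeWord d d P = (List.range d).flatMap (rowWord P d) := rfl

lemma stage_succ (P : Finset (ℕ × ℕ)) (d t : ℕ) :
    stage P d (t + 1) = (rowWord P d t).foldl hstep (stage P d t) := by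
  unfold stage hword
  rw [List.range_succ, List.flatMap_append, List.foldl_append]
  simp

lemma mem_rowWord {P : Finset (ℕ × ℕ)} {d r a : ℕ} (h : a ∈ rowWord P d r) :
    ∃ j, j < d ∧ (r, j) ∈ P ∧ a = r + j := by
  rw [rowWord, List.mem_filterMap] at h
  obtain ⟨j, hj, hja⟩ := h
  rw [List.mem_reverse, List.mem_range] at hj
  by_cases hP : (r, j) ∈ P
  · rw [if_pos hP] at hja
    exact ⟨j, hj, hP, (Option.some_inj.mp hja).symm⟩
  · rw [if_neg hP] at hja; cases hja

lemma hword_eq_suffix (P : Finset (ℕ × ℕ)) (d t : ℕ) (h : t ≤ d) :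
    hword (pipeWord d d P)
      = ((List.range (d - t)).flatMap (fun i => rowWord P d (t + i))).foldl hstep
          (stage P d t) := by
  rw [pipeWord_eq_flatMap]
  have : List.range d = List.range t ++ (List.range (d - t)).map (t + ·) := by
    rw [← List.range_add]; congr 1; omega
  rw [this, List.flatMap_append, hword, List.foldl_append]
  rw [List.flatMap_map]
  rfl

lemma filterMap_eq_map_of_some {α β : Type*} (f : α → Option β) (g : α → β) :
    ∀ (l : List α), (∀ x ∈ l, f x = some (g x)) → l.filterMap f = l.map g := by
  intro l
  induction l with
  | nil => intro _; rfl
  | cons a l ih =>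
    intro h
    rw [List.filterMap_cons, h a (List.mem_cons_self), List.map_cons,
      ih (fun x hx => h x (List.mem_cons_of_mem a hx))]

lemma filterMap_eq_nil_of_none {α β : Type*} (f : α → Option β) :
    ∀ (l : List α), (∀ x ∈ l, f x = none) → l.filterMap f = [] := by
  intro l
  induction l with
  | nil => intro _; rfl
  | cons a l ih =>
    intro h
    rw [List.filterMap_cons, h a (List.mem_cons_self),
      ih (fun x hx => h x (List.mem_cons_of_mem a hx))]

/-- Splitting the reading word of a row at a column cutoff `c`. -/
lemma rowWord_split (P : Finset (ℕ × ℕ)) (d r c : ℕ) (h : c ≤ d) :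
    rowWord P d r
      = (((List.range (d - c)).map (c + ·)).reverse.filterMap
          (fun j => if (r, j) ∈ P then some (r + j) else none))
        ++ ((List.range c).reverse.filterMap
          (fun j => if (r, j) ∈ P then some (r + j) else none)) := by
  unfold rowWord
  have : List.range d = List.range c ++ (List.range (d - c)).map (c + ·) := by
    rw [← List.range_add]; congr 1; omega
  rw [this, List.reverse_append, List.filterMap_append]

lemma mem_hi_part {P : Finset (ℕ × ℕ)} {r c e a : ℕ}
    (h : a ∈ ((List.range e).map (c + ·)).reverse.filterMap
      (fun j => if (r, j) ∈ P then some (r + j) else none)) :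
    r + c ≤ a := by
  rw [List.mem_filterMap] at h
  obtain ⟨j, hj, hja⟩ := h
  rw [List.mem_reverse, List.mem_map] at hj
  obtain ⟨i, _, hi⟩ := hj
  by_cases hP : (r, j) ∈ P
  · rw [if_pos hP] at hja
    have := Option.some_inj.mp hja
    omega
  · rw [if_neg hP] at hja; cases hja

/-- A fully-crossed stretch `[c₂, c₁)` of row `r` contributes a descending run. -/
lemma row_full_stretch (P : Finset (ℕ × ℕ)) (r c₂ m : ℕ)
    (hfull : ∀ j, c₂ ≤ j → j < c₂ + m → (r, j) ∈ P) :
    ((List.range m).map (c₂ + ·)).reverse.filterMap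
        (fun j => if (r, j) ∈ P then some (r + j) else none)
      = (List.range m).reverse.map ((r + c₂) + ·) := by
  rw [← List.map_reverse, List.filterMap_map]
  have : ∀ x ∈ (List.range m).reverse,
      ((fun j => if (r, j) ∈ P then some (r + j) else none) ∘ (c₂ + ·)) x
        = some ((fun x => (r + c₂) + x) x) := by
    intro x hx
    rw [List.mem_reverse, List.mem_range] at hx
    have : (r, c₂ + x) ∈ P := hfull _ (by omega) (by omega)
    simp only [Function.comp_apply, if_pos this]
    congr 1; omega
  exact filterMap_eq_map_of_some _ _ _ this

end RowWords

section RegionA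

/-- Processing a row that is fully crossed on `[0, C)` advances the invariant
that the values `< C` occupy positions `t, …, t + C - 1`. -/
lemma full_row_step (P : Finset (ℕ × ℕ)) (d t C : ℕ) (hC : C ≤ d)
    (hfull : ∀ j, j < C → (t, j) ∈ P)
    (hinv : ∀ i, i < C → stage P d t (t + i) = i) :
    ∀ i, i < C → stage P d (t + 1) (t + 1 + i) = i := by
  intro i hi
  set u := stage P d t with hu
  set L1 := (((List.range (d - C)).map (C + ·)).reverse.filterMap
      (fun j => if (t, j) ∈ P then some (t + j) else none)) with hL1
  have hsplit : rowWord P d t = L1 ++ (List.range C).reverse.map (t + ·) := by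
    rw [rowWord_split P d t C hC, hL1]
    congr 1
    apply filterMap_eq_map_of_some
    intro x hx
    rw [List.mem_reverse, List.mem_range] at hx
    rw [if_pos (hfull x hx)]
  obtain ⟨σ, hσ, hσfix⟩ := foldl_hstep_exists_sigma L1 u (t + C)
    (fun a ha => mem_hi_part (hL1 ▸ ha))
  have hval : ∀ i, i < C → (L1.foldl hstep u) (t + i) = i := by
    intro i hi
    rw [hσ, Equiv.Perm.mul_apply, hσfix _ (by omega)]
    exact hinv i hi
  have htop : C ≤ (L1.foldl hstep u) (t + C) := by
    rw [hσ, Equiv.Perm.mul_apply]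
    have hq : t + C ≤ σ (t + C) := sigma_ge_of_fix hσfix (le_refl _)
    by_contra hlt
    push_neg at hlt
    have h2 : u (t + u (σ (t + C))) = u (σ (t + C)) := hinv (u (σ (t + C))) hlt
    have := u.injective h2
    omega
  have hrun := foldl_hstep_run C t (L1.foldl hstep u) (fun i hi => by
    rw [hval i hi]; omega)
  have hstage : stage P d (t + 1)
      = ((List.range C).reverse.map (t + ·)).foldl hstep (L1.foldl hstep u) := by
    rw [stage_succ, hsplit, List.foldl_append]
  rw [hstage, show t + 1 + i = t + i + 1 by omega, hrun.2.1 i hi, hval i hi]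

/-- If `δ(P)` sends all of `[0,R)` to `[C,∞)`, then `P` contains every tile of
`[0,R) × [0,C)`. -/
lemma dominance_lemma (P : Finset (ℕ × ℕ)) (d R C : ℕ) (hR : R ≤ d) (hC : C ≤ d)
    (hv : ∀ i, i < R → C ≤ hword (pipeWord d d P) i) :
    ∀ i j, i < R → j < C → (i, j) ∈ P := by
  have inv : ∀ t, (∀ i j, i < t → j < C → (i, j) ∈ P) →
      ∀ i, i < C → stage P d t (t + i) = i := by
    intro t
    induction t with
    | zero =>
      intro _ i _
      have h1 : stage P d 0 = 1 := rfl
      rw [h1]; simp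
    | succ t ih =>
      intro hfull
      exact full_row_step P d t C hC (fun j hj => hfull t j (by omega) hj)
        (ih (fun i j hij hjC => hfull i j (by omega) hjC))
  have main : ∀ t, t ≤ R → ∀ i j, i < t → j < C → (i, j) ∈ P := by
    intro t
    induction t with
    | zero => intro _ i j hij _; omega
    | succ t ih =>
      intro htR
      have hprev := ih (by omega)
      have hrow : ∀ jj, jj < C → (t, jj) ∈ P := by
        by_contra hmiss
        push_neg at hmiss
        obtain ⟨j0, hj0C, hj0P⟩ := hmiss
        have hex : ∃ jj, (t, jj) ∉ P ∧ jj < C := ⟨j0, hj0P, hj0C⟩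
        set js := Nat.find hex with hjs
        obtain ⟨hjsP, hjsC⟩ := Nat.find_spec hex
        have hjslow : ∀ j', j' < js → (t, j') ∈ P := by
          intro j' hj'
          by_contra hj'P
          exact Nat.find_min hex hj' ⟨hj'P, by omega⟩
        set u := stage P d t with hu
        have hinv := inv t hprev
        set L1 := (((List.range (d - (js+1))).map ((js+1) + ·)).reverse.filterMap
            (fun j => if (t, j) ∈ P then some (t + j) else none)) with hL1
        have hsplit : rowWord P d t = L1 ++ (List.range js).reverse.map (t + ·) := by
          rw [rowWord_split P d t (js+1) (by omega), hL1]
          congr 1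
          have hrev : (List.range (js+1)).reverse = js :: (List.range js).reverse := by
            rw [List.range_succ, List.reverse_append]; simp
          rw [hrev, List.filterMap_cons, if_neg hjsP]
          apply filterMap_eq_map_of_some
          intro x hx
          rw [List.mem_reverse, List.mem_range] at hx
          rw [if_pos (hjslow x hx)]
        obtain ⟨σ, hσ, hσfix⟩ := foldl_hstep_exists_sigma L1 u (t + (js+1))
          (fun a ha => mem_hi_part (hL1 ▸ ha))
        have hval : ∀ i, i ≤ js → (L1.foldl hstep u) (t + i) = i := by
          intro i hi
          rw [hσ, Equiv.Perm.mul_apply, hσfix _ (by omega)]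
          exact hinv i (by omega)
        have hrun := foldl_hstep_run js t (L1.foldl hstep u) (fun i hi => by
          rw [hval i (by omega), hval js (le_refl _)]; omega)
        have hstage : stage P d (t + 1) t = js := by
          rw [stage_succ, hsplit, List.foldl_append, hrun.1, hval js (le_refl _)]
        have hfin : hword (pipeWord d d P) t = js := by
          rw [hword_eq_suffix P d (t+1) (by omega)]
          rw [foldl_hstep_apply_of_ne _ _ _ ?_, hstage]
          intro a ha
          rw [List.mem_flatMap] at ha
          obtain ⟨r, _, har⟩ := ha
          obtain ⟨jj, _, _, haj⟩ := mem_rowWord har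
          omega
        have := hv t (by omega)
        omega
      intro i j hit hjC
      rcases Nat.lt_or_ge i t with hi | hi
      · exact hprev i j hi hjC
      · have hit' : i = t := by omega
        rw [hit']
        exact hrow j hjC
  exact fun i j hi hj => main R (le_refl R) i j hi hj

end RegionA

section RegionB

lemma range_rev_filterMap_split {β : Type*} (g : ℕ → Option β) (c₂ c₁ : ℕ) (h : c₂ ≤ c₁) :
    (List.range c₁).reverse.filterMap g
      = ((List.range (c₁ - c₂)).map (c₂ + ·)).reverse.filterMap g
        ++ (List.range c₂).reverse.filterMap g := by
  have : List.range c₁ = List.range c₂ ++ (List.range (c₁ - c₂)).map (c₂ + ·) := by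
    rw [← List.range_add]; congr 1; omega
  rw [this, List.reverse_append, List.filterMap_append]

lemma mem_range_rev_filterMap {P : Finset (ℕ × ℕ)} {r c a : ℕ}
    (h : a ∈ (List.range c).reverse.filterMap
      (fun j => if (r, j) ∈ P then some (r + j) else none)) :
    ∃ j, j < c ∧ (r, j) ∈ P ∧ a = r + j := by
  rw [List.mem_filterMap] at h
  obtain ⟨j, hj, hja⟩ := h
  rw [List.mem_reverse, List.mem_range] at hj
  by_cases hP : (r, j) ∈ P
  · rw [if_pos hP] at hja
    exact ⟨j, hj, hP, (Option.some_inj.mp hja).symm⟩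
  · rw [if_neg hP] at hja; cases hja

lemma mem_prefix_letters {P : Finset (ℕ × ℕ)} {d r a : ℕ}
    (h : a ∈ (List.range r).flatMap (rowWord P d)) :
    ∃ r' j, r' < r ∧ (r', j) ∈ P ∧ a = r' + j := by
  rw [List.mem_flatMap] at h
  obtain ⟨r', hr', har⟩ := h
  rw [List.mem_range] at hr'
  obtain ⟨j, _, hP, haj⟩ := mem_rowWord har
  exact ⟨r', j, hr', hP, haj⟩

lemma stage_fix_hi (P : Finset (ℕ × ℕ)) (d DX : ℕ)
    (hrect : ∀ p ∈ P, p.2 < DX) (r q : ℕ) (hq : r + DX ≤ q) :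
    stage P d r q = q := by
  unfold stage hword
  rw [foldl_hstep_apply_of_ne]
  · rfl
  · intro a ha
    obtain ⟨r', j, hr', hP, haj⟩ := mem_prefix_letters ha
    have := hrect _ hP
    simp only at this
    omega

lemma stage_lt (P : Finset (ℕ × ℕ)) (d DX : ℕ)
    (hrect : ∀ p ∈ P, p.2 < DX) (r : ℕ) :
    ∀ p, p < r + DX → stage P d r p < r + DX := by
  unfold stage hword
  apply foldl_hstep_lt
  · intro a ha
    obtain ⟨r', j, hr', hP, haj⟩ := mem_prefix_letters ha
    have := hrect _ hP
    simp only at this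
    omega
  · intro p hp
    simpa using hp

/-- The south-pipe lemma: if the tile `(t, js)` is missing but everything east of it
in row `t` and everything weakly southeast of it (within the rectangle) is present,
then the pipe entering the bottom of column `js` exits at column `DX + t`. -/
lemma south_pipe_lemma (P : Finset (ℕ × ℕ)) (d DY DX : ℕ)
    (hrect : ∀ p ∈ P, p.1 < DY ∧ p.2 < DX) (hDY : DY ≤ d) (hDX : DX ≤ d)
    (t js : ℕ) (ht : t < DY) (hjs : js < DX)
    (hmiss : (t, js) ∉ P)
    (hcol : ∀ r j, t < r → r < DY → js ≤ j → j < DX → (r, j) ∈ P)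
    (hrow : ∀ j, js < j → j < DX → (t, j) ∈ P) :
    hword (pipeWord d d P) (DY + js) = t + DX := by
  have hrect2 : ∀ p ∈ P, p.2 < DX := fun p hp => (hrect p hp).2
  -- a row of the grid with no crosses beyond column `DX`
  have hrow_nohi : ∀ r, rowWord P d r
      = (List.range DX).reverse.filterMap
          (fun j => if (r, j) ∈ P then some (r + j) else none) := by
    intro r
    unfold rowWord
    rw [range_rev_filterMap_split _ DX d hDX]
    have : (((List.range (d - DX)).map (DX + ·)).reverse.filterMap
        (fun j => if (r, j) ∈ P then some (r + j) else none)) = [] := by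
      apply filterMap_eq_nil_of_none
      intro x hx
      rw [List.mem_reverse, List.mem_map] at hx
      obtain ⟨i, _, hi⟩ := hx
      have hxP : (r, x) ∉ P := by
        intro hc
        have := hrect2 _ hc
        simp only at this
        omega
      rw [if_neg hxP]
    rw [this, List.nil_append]
  -- the invariant: at every stage `r` with `t < r ≤ DY`, the value `t + DX`
  -- sits at position `r + js`
  have inv : ∀ r, t + 1 ≤ r → r ≤ DY → stage P d r (r + js) = t + DX := by
    intro r
    induction r with
    | zero => omega
    | succ r ih =>
      intro hr1 hr2
      rcases Nat.lt_or_ge r (t + 1) with hrt | hrt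
      · -- base case: r = t, process row t
        have hrt' : r = t := by omega
        subst hrt'
        have hsplit : rowWord P d r
            = ((List.range (DX - js - 1)).reverse.map ((r + (js+1)) + ·))
              ++ (List.range (js+1)).reverse.filterMap
                  (fun j => if (r, j) ∈ P then some (r + j) else none) := by
          rw [hrow_nohi r, range_rev_filterMap_split _ (js+1) DX (by omega)]
          congr 1
          have := row_full_stretch P r (js+1) (DX - (js+1))
            (fun j hj1 hj2 => hrow j (by omega) (by omega))
          rw [show DX - (js+1) = DX - js - 1 by omega] at this
          exact this
        set u := stage P d r with hu
        have htop : u (r + DX) = r + DX := stage_fix_hi P d DX hrect2 r _ (le_refl _)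
        have hcond : ∀ i, i < DX - js - 1 → u ((r + (js+1)) + i) < u ((r + (js+1)) + (DX - js - 1)) := by
          intro i hi
          have h1 : (r + (js+1)) + (DX - js - 1) = r + DX := by omega
          rw [h1, htop]
          exact stage_lt P d DX hrect2 r _ (by omega)
        have hrun := foldl_hstep_run (DX - js - 1) (r + (js+1)) u hcond
        have hmid : (((List.range (DX - js - 1)).reverse.map ((r + (js+1)) + ·)).foldl
            hstep u) (r + (js+1)) = r + DX := by
          rw [hrun.1, show (r + (js+1)) + (DX - js - 1) = r + DX by omega, htop]
        have hstage : stage P d (r + 1) (r + (js + 1)) = r + DX := by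
          rw [stage_succ, hsplit, List.foldl_append]
          rw [foldl_hstep_apply_of_ne, hmid]
          intro a ha
          obtain ⟨j, hj, hP, haj⟩ := mem_range_rev_filterMap ha
          have hjne : j ≠ js := fun hc => hmiss (hc ▸ hP)
          omega
        rw [show r + 1 + js = r + (js + 1) by omega, hstage]
      · -- inductive step: t < r, process the full row r
        have hprev := ih (by omega) (by omega)
        have hsplit : rowWord P d r
            = ((List.range (DX - js)).reverse.map ((r + js) + ·))
              ++ (List.range js).reverse.filterMap
                  (fun j => if (r, j) ∈ P then some (r + j) else none) := by
          rw [hrow_nohi r, range_rev_filterMap_split _ js DX (by omega)]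
          congr 1
          exact row_full_stretch P r js (DX - js)
            (fun j hj1 hj2 => hcol r j (by omega) (by omega) hj1 (by omega))
        set u := stage P d r with hu
        have htop : u (r + DX) = r + DX := stage_fix_hi P d DX hrect2 r _ (le_refl _)
        have hcond : ∀ i, i < DX - js → u ((r + js) + i) < u ((r + js) + (DX - js)) := by
          intro i hi
          have h1 : (r + js) + (DX - js) = r + DX := by omega
          rw [h1, htop]
          exact stage_lt P d DX hrect2 r _ (by omega)
        have hrun := foldl_hstep_run (DX - js) (r + js) u hcond
        have hmid : (((List.range (DX - js)).reverse.map ((r + js) + ·)).foldl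
            hstep u) ((r + js) + 0 + 1) = u ((r + js) + 0) :=
          hrun.2.1 0 (by omega)
        have hstage : stage P d (r + 1) (r + js + 1) = t + DX := by
          rw [stage_succ, hsplit, List.foldl_append]
          rw [foldl_hstep_apply_of_ne]
          · rw [hmid]
            simpa using hprev
          · intro a ha
            obtain ⟨j, hj, hP, haj⟩ := mem_range_rev_filterMap ha
            omega
        rw [show r + 1 + js = r + js + 1 by omega, hstage]
  -- conclude: rows `≥ DY` are empty
  have hfin := inv DY (by omega) (le_refl _)
  rw [hword_eq_suffix P d DY hDY, foldl_hstep_apply_of_ne]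
  · exact hfin
  · intro a ha
    rw [List.mem_flatMap] at ha
    obtain ⟨i, _, hai⟩ := ha
    obtain ⟨j, _, hP, haj⟩ := mem_rowWord hai
    have := (hrect _ hP).1
    simp only at this
    omega

end RegionB

section CountingBasics

variable {n : ℕ} {dx dy : ℕ → ℕ}

lemma rowY_mono (dy : ℕ → ℕ) {a b : ℕ} (h : a ≤ b) : rowY dy a ≤ rowY dy b := by
  unfold rowY
  exact Finset.sum_le_sum_of_subset (Finset.range_subset_range.mpr h)

lemma rowY_succ (dy : ℕ → ℕ) (j : ℕ) : rowY dy (j + 1) = rowY dy j + dy j :=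
  Finset.sum_range_succ _ _

lemma colX_antitone (n : ℕ) (dx : ℕ → ℕ) {a b : ℕ} (h : a ≤ b) :
    colX n dx b ≤ colX n dx a := by
  unfold colX
  exact Finset.sum_le_sum_of_subset (Finset.Icc_subset_Icc (by omega) (le_refl n))

lemma colX_zero (n : ℕ) (dx : ℕ → ℕ) : colX n dx 0 = dX n dx := rfl

lemma colX_top (n : ℕ) (dx : ℕ → ℕ) : colX n dx n = 0 := by
  unfold colX
  rw [Finset.Icc_eq_empty (by omega), Finset.sum_empty]

lemma colX_succ (n : ℕ) (dx : ℕ → ℕ) {k : ℕ} (hk1 : 1 ≤ k) (hk2 : k ≤ n) :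
    colX n dx k + dx k = colX n dx (k - 1) := by
  unfold colX
  have h1 : k - 1 + 1 = k := by omega
  rw [h1]
  have h2 : Finset.Icc k n = (Finset.Ioc k n).cons k Finset.left_notMem_Ioc :=
    Finset.Icc_eq_cons_Ioc hk2
  rw [h2, Finset.sum_cons, ← Finset.Icc_add_one_left_eq_Ioc]
  omega

lemma rowY_block (dy : ℕ → ℕ) : ∀ M i, i < rowY dy M →
    ∃ m, m < M ∧ rowY dy m ≤ i ∧ i < rowY dy (m + 1) := by
  intro M
  induction M with
  | zero => intro i hi; simp [rowY] at hi
  | succ M ih =>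
    intro i hi
    rcases Nat.lt_or_ge i (rowY dy M) with h | h
    · obtain ⟨m, hm, h1, h2⟩ := ih i h
      exact ⟨m, by omega, h1, h2⟩
    · exact ⟨M, by omega, h, hi⟩

lemma colX_block (n : ℕ) (dx : ℕ → ℕ) : ∀ j, j < colX n dx 0 →
    ∃ k, 1 ≤ k ∧ k ≤ n ∧ colX n dx k ≤ j ∧ j < colX n dx (k - 1) := by
  suffices h : ∀ s K, n - K ≤ s → K ≤ n → ∀ j, j < colX n dx K →
      ∃ k, K < k ∧ k ≤ n ∧ colX n dx k ≤ j ∧ j < colX n dx (k - 1) by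
    intro j hj
    obtain ⟨k, hk1, hk2, hk3, hk4⟩ := h n 0 (by omega) (by omega) j hj
    exact ⟨k, hk1, hk2, hk3, hk4⟩
  intro s
  induction s with
  | zero =>
    intro K h1 h2 j hj
    have : K = n := by omega
    rw [this, colX_top] at hj
    omega
  | succ s ih =>
    intro K h1 h2 j hj
    have hKn : K < n := by
      by_contra hc
      have : K = n := by omega
      rw [this, colX_top] at hj
      omega
    rcases Nat.lt_or_ge j (colX n dx (K + 1)) with h | h
    · obtain ⟨k, hk1, hk2, hk3, hk4⟩ := ih (K + 1) (by omega) (by omega) j h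
      exact ⟨k, by omega, hk2, hk3, hk4⟩
    · refine ⟨K + 1, by omega, by omega, h, ?_⟩
      rw [show K + 1 - 1 = K from rfl]
      exact hj

end CountingBasics

section PathCounts

variable (n : ℕ) (dx dy : ℕ → ℕ) (L : LaceData)

lemma pathF_zero (u : ℕ) :
    pathF n dx dy L u 0 = (Finset.range (colSize n dx dy u)).image (fun i => (i, i)) := rfl

lemma pathF_one (u : ℕ) :
    pathF n dx dy L u 1 = compF (pathF n dx dy L u 0) (matchingAt n dx dy L u) := by
  show pathF n dx dy L u (0 + 1) = _
  rw [pathF]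
  congr 1

lemma compF_diag (N : ℕ) (M : Finset (ℕ × ℕ)) :
    compF ((Finset.range N).image (fun i => (i, i))) M
      = M.filter (fun q => q.1 < N) := by
  ext ⟨a, b⟩
  simp only [compF, Finset.mem_image, Finset.mem_filter, Finset.mem_product,
    Finset.mem_range]
  constructor
  · rintro ⟨⟨⟨x, y⟩, ⟨z, w⟩⟩, ⟨⟨⟨⟨i, hi, hii⟩, hzw⟩, heq⟩, hab⟩⟩
    simp only [Prod.mk.injEq] at hii hab heq
    refine ⟨?_, by omega⟩
    have hza : z = a := by omega
    have hwb : w = b := hab.2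
    rw [← hza, ← hwb]
    exact hzw
  · rintro ⟨hab, ha⟩
    refine ⟨⟨(a, a), (a, b)⟩, ⟨⟨⟨⟨a, ha, rfl⟩, hab⟩, rfl⟩, rfl⟩⟩

lemma pathCount_self {p : ℕ} (h1 : 1 ≤ p) (h2 : p ≤ 2 * n + 1) :
    pathCount n dx dy L p p = colSize n dx dy p := by
  unfold pathCount
  rw [if_pos ⟨h1, le_refl p, h2⟩, Nat.sub_self, pathF_zero,
    Finset.card_image_of_injective _ (fun a b h => congrArg Prod.fst h)]
  exact Finset.card_range _

lemma pathCount_matching {p : ℕ} (h1 : 1 ≤ p) (h2 : p + 1 ≤ 2 * n + 1)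
    (hb : ∀ q ∈ matchingAt n dx dy L p, q.1 < colSize n dx dy p) :
    pathCount n dx dy L p (p + 1) = (matchingAt n dx dy L p).card := by
  unfold pathCount
  rw [if_pos ⟨h1, by omega, h2⟩, show p + 1 - p = 1 by omega, pathF_one,
    pathF_zero, compF_diag]
  rw [Finset.filter_true_of_mem hb]

lemma pathCount_out_right {u v : ℕ} (hv : 2 * n + 1 < v) :
    pathCount n dx dy L u v = 0 := by
  unfold pathCount
  rw [if_neg (by omega)]

lemma pathCount_zero_left (v : ℕ) : pathCount n dx dy L 0 v = 0 := by
  unfold pathCount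
  rw [if_neg (by omega)]

/-- Telescoping sum of lace counts over all right endpoints. -/
lemma sum_laceCount {pu : ℕ} (h1 : 1 ≤ pu) (h2 : pu ≤ 2 * n + 1) :
    ∑ p ∈ Finset.Icc pu (2 * n + 1), laceCount n dx dy L pu p
      = (colSize n dx dy pu : ℤ) - pathCount n dx dy L (pu - 1) pu := by
  have hIco : Finset.Icc pu (2 * n + 1) = Finset.Ico pu (2 * n + 2) := by
    exact (Finset.Ico_add_one_right_eq_Icc _ _).symm
  rw [hIco, Finset.sum_Ico_eq_sum_range]
  set g : ℕ → ℤ := fun i =>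
    (pathCount n dx dy L pu (pu + i) : ℤ) - pathCount n dx dy L (pu - 1) (pu + i) with hg
  have hterm : ∀ i, laceCount n dx dy L pu (pu + i) = g i - g (i + 1) := by
    intro i
    unfold laceCount
    rw [hg]
    simp only
    rw [show pu + i + 1 = pu + (i + 1) by omega]
    ring
  rw [Finset.sum_congr rfl (fun i _ => hterm i), Finset.sum_range_sub' g]
  have hN : pu + (2 * n + 2 - pu) = 2 * n + 2 := by omega
  have hg0 : g 0 = (colSize n dx dy pu : ℤ) - pathCount n dx dy L (pu - 1) pu := by
    rw [hg]
    simp only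
    rw [Nat.add_zero, pathCount_self n dx dy L h1 h2]
  have hgN : g (2 * n + 2 - pu) = 0 := by
    rw [hg]
    simp only
    rw [hN, pathCount_out_right n dx dy L (by omega),
      pathCount_out_right n dx dy L (by omega)]
    ring
  rw [hg0, hgN]
  ring

end PathCounts

section BlockPartition

variable {n : ℕ} {dx dy : ℕ → ℕ}

/-- If a disjoint family of column sets accounts for all the 1s in the rows `R`,
then every row of `R` has its 1 in one of those column sets. -/
lemma all_mem_of_sum_counts (v : Equiv.Perm ℕ) (R : Finset ℕ) (A : Finset ℕ)
    (C : ℕ → Finset ℕ)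
    (hdisj : ∀ p ∈ A, ∀ q ∈ A, p ≠ q → Disjoint (C p) (C q))
    (hsum : ∑ p ∈ A, onesIn v R (C p) = R.card) :
    ∀ i ∈ R, ∃ p ∈ A, v i ∈ C p := by
  classical
  set g := R.filter (fun i => ∃ p ∈ A, v i ∈ C p) with hgdef
  have hbi : g = A.biUnion (fun p => R.filter (fun i => v i ∈ C p)) := by
    ext i
    simp only [hgdef, Finset.mem_filter, Finset.mem_biUnion]
    tauto
  have hcard : ∑ p ∈ A, onesIn v R (C p) = g.card := by
    rw [hbi, Finset.card_biUnion]
    · rfl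
    · intro p hp q hq hpq
      rw [Function.onFun, Finset.disjoint_left]
      intro i hip hiq
      rw [Finset.mem_filter] at hip hiq
      exact Finset.disjoint_left.mp (hdisj p hp q hq hpq) hip.2 hiq.2
  have hsub : g ⊆ R := Finset.filter_subset _ _
  have : g = R := Finset.eq_of_subset_of_card_le hsub (by omega)
  intro i hi
  have : i ∈ g := this ▸ hi
  rw [hgdef, Finset.mem_filter] at this
  exact this.2

lemma vertColBlock_even (p : ℕ) (hp : p % 2 = 0) :
    vertColBlock n dx dy p
      = Finset.Ico (colX n dx (n - p / 2 + 1))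
          (colX n dx (n - p / 2 + 1) + dx (n - p / 2 + 1)) := by
  unfold vertColBlock
  rw [if_neg (by omega)]

lemma vertColBlock_odd (p : ℕ) (hp : p % 2 = 1) :
    vertColBlock n dx dy p
      = Finset.Ico (colY n dx dy (n - (p - 1) / 2))
          (colY n dx dy (n - (p - 1) / 2) + dy (n - (p - 1) / 2)) := by
  unfold vertColBlock
  rw [if_pos hp]

/-- Membership bounds for an even (`x`-type) column block. -/
lemma mem_vertColBlock_even {p c : ℕ} (hp : p % 2 = 0) (h1 : 1 ≤ p) (h2 : p ≤ 2 * n + 1)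
    (hc : c ∈ vertColBlock n dx dy p) :
    colX n dx (n - p / 2 + 1) ≤ c ∧ c < colX n dx (n - p / 2) ∧
      1 ≤ n - p / 2 + 1 ∧ n - p / 2 + 1 ≤ n := by
  rw [vertColBlock_even p hp, Finset.mem_Ico] at hc
  have hk1 : 1 ≤ n - p / 2 + 1 := by omega
  have hk2 : n - p / 2 + 1 ≤ n := by omega
  have := colX_succ n dx hk1 hk2
  rw [show n - p / 2 + 1 - 1 = n - p / 2 by omega] at this
  exact ⟨hc.1, by omega, hk1, hk2⟩

/-- Membership bounds for an odd (`y`-type) column block. -/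
lemma mem_vertColBlock_odd {p c : ℕ} (hp : p % 2 = 1) (h2 : p ≤ 2 * n + 1)
    (hc : c ∈ vertColBlock n dx dy p) :
    dX n dx + rowY dy (n - (p - 1) / 2) ≤ c ∧
      c < dX n dx + rowY dy (n - (p - 1) / 2 + 1) ∧ n - (p - 1) / 2 ≤ n := by
  rw [vertColBlock_odd p hp, Finset.mem_Ico] at hc
  unfold colY at hc
  rw [rowY_succ]
  exact ⟨hc.1, by omega, by omega⟩

lemma vertColBlock_disjoint {p q : ℕ} (hp1 : 1 ≤ p) (hp2 : p ≤ 2 * n + 1)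
    (hq1 : 1 ≤ q) (hq2 : q ≤ 2 * n + 1) (hpq : p ≠ q) :
    Disjoint (vertColBlock n dx dy p) (vertColBlock n dx dy q) := by
  rw [Finset.disjoint_left]
  intro c hcp hcq
  rcases Nat.even_or_odd p with hpe | hpo <;> rcases Nat.even_or_odd q with hqe | hqo
  · -- both even
    have hpe' : p % 2 = 0 := Nat.even_iff.mp hpe
    have hqe' : q % 2 = 0 := Nat.even_iff.mp hqe
    obtain ⟨ha1, ha2, ha3, ha4⟩ := mem_vertColBlock_even hpe' hp1 hp2 hcp
    obtain ⟨hb1, hb2, hb3, hb4⟩ := mem_vertColBlock_even hqe' hq1 hq2 hcq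
    have hne : n - p / 2 ≠ n - q / 2 := by omega
    rcases Nat.lt_or_ge (n - p / 2) (n - q / 2) with h | h
    · have := colX_antitone n dx (show n - p / 2 + 1 ≤ n - q / 2 by omega)
      omega
    · have := colX_antitone n dx (show n - q / 2 + 1 ≤ n - p / 2 by omega)
      omega
  · -- p even, q odd
    have hpe' : p % 2 = 0 := Nat.even_iff.mp hpe
    have hqo' : q % 2 = 1 := Nat.odd_iff.mp hqo
    obtain ⟨ha1, ha2, _, ha4⟩ := mem_vertColBlock_even hpe' hp1 hp2 hcp
    obtain ⟨hb1, _, _⟩ := mem_vertColBlock_odd hqo' hq2 hcq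
    have h3 : colX n dx (n - p / 2) ≤ colX n dx 0 := colX_antitone n dx (by omega)
    rw [colX_zero] at h3
    omega
  · -- p odd, q even
    have hpo' : p % 2 = 1 := Nat.odd_iff.mp hpo
    have hqe' : q % 2 = 0 := Nat.even_iff.mp hqe
    obtain ⟨ha1, _, _⟩ := mem_vertColBlock_odd hpo' hp2 hcp
    obtain ⟨hb1, hb2, _, hb4⟩ := mem_vertColBlock_even hqe' hq1 hq2 hcq
    have h3 : colX n dx (n - q / 2) ≤ colX n dx 0 := colX_antitone n dx (by omega)
    rw [colX_zero] at h3
    omega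
  · -- both odd
    have hpo' : p % 2 = 1 := Nat.odd_iff.mp hpo
    have hqo' : q % 2 = 1 := Nat.odd_iff.mp hqo
    obtain ⟨ha1, ha2, ha3⟩ := mem_vertColBlock_odd hpo' hp2 hcp
    obtain ⟨hb1, hb2, hb3⟩ := mem_vertColBlock_odd hqo' hq2 hcq
    have hne : n - (p - 1) / 2 ≠ n - (q - 1) / 2 := by omega
    rcases Nat.lt_or_ge (n - (p - 1) / 2) (n - (q - 1) / 2) with h | h
    · have := rowY_mono dy (show n - (p - 1) / 2 + 1 ≤ n - (q - 1) / 2 by omega)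
      omega
    · have := rowY_mono dy (show n - (q - 1) / 2 + 1 ≤ n - (p - 1) / 2 by omega)
      omega

end BlockPartition

section ZelevinskyBounds

variable {n : ℕ} {dx dy : ℕ → ℕ} {L : LaceData} {v : Equiv.Perm ℕ}

/-- (R1): every row of the block `y_m` has its 1 weakly east of the column block
`x_{m+1}`. -/
lemma zel_row_lower (hL : IsLacingDiagram n dx dy L) (hv : IsZelevinsky n dx dy L v)
    (m : ℕ) (hm : m ≤ n) :
    ∀ i, rowY dy m ≤ i → i < rowY dy m + dy m → colX n dx (m + 1) ≤ v i := by
  rcases Nat.lt_or_ge m n with hmn | hmn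
  swap
  · -- m = n : trivial since colX (n+1) = 0
    intro i _ _
    have : colX n dx (m + 1) = 0 := by
      unfold colX
      rw [Finset.Icc_eq_empty (by omega), Finset.sum_empty]
    omega
  intro i hi1 hi2
  set pu := 2 * (n - m) + 1 with hpu
  have hpu1 : 1 ≤ pu := by omega
  have hpu2 : pu ≤ 2 * n + 1 := by omega
  have hRB : vertRowBlock n dx dy pu = Finset.Ico (rowY dy m) (rowY dy m + dy m) := by
    unfold vertRowBlock
    rw [if_pos (by omega), show n - (pu - 1) / 2 = m by omega]
  have hcs : colSize n dx dy pu = dy m := by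
    unfold colSize
    rw [if_pos (by omega), show n - (pu - 1) / 2 = m by omega]
  -- the matching between columns pu-1 and pu
  have hme : matchingAt n dx dy L (2 * (n - m)) = transposeF (L.2 (m + 1)) := by
    unfold matchingAt
    rw [if_neg (by omega), show n - 2 * (n - m) / 2 + 1 = m + 1 by omega]
  have hcs' : colSize n dx dy (2 * (n - m)) = dx (m + 1) := by
    unfold colSize
    rw [if_neg (by omega), show n - 2 * (n - m) / 2 + 1 = m + 1 by omega]
  have hbnd : ∀ q ∈ matchingAt n dx dy L (2 * (n - m)),
      q.1 < colSize n dx dy (2 * (n - m)) := by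
    intro q hq
    rw [hme] at hq
    unfold transposeF at hq
    rw [Finset.mem_image] at hq
    obtain ⟨⟨a, b⟩, hab, hq'⟩ := hq
    have := ((hL.1 (m + 1) (by omega) (by omega)).2.1 _ hab).2
    rw [← hq', hcs']
    exact this
  have hpc : pathCount n dx dy L (2 * (n - m)) (2 * (n - m) + 1)
      = (matchingAt n dx dy L (2 * (n - m))).card :=
    pathCount_matching n dx dy L (by omega) (by omega) hbnd
  -- the sum over all allowed blocks
  set A := insert (2 * (n - m)) (Finset.Icc pu (2 * n + 1)) with hA
  have hnm : 2 * (n - m) ∉ Finset.Icc pu (2 * n + 1) := by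
    rw [Finset.mem_Icc]; omega
  have hsumZ : (∑ p ∈ A, (onesIn v (vertRowBlock n dx dy pu) (vertColBlock n dx dy p) : ℤ))
      = (dy m : ℤ) := by
    rw [hA, Finset.sum_insert hnm]
    have hIcc : ∑ p ∈ Finset.Icc pu (2 * n + 1),
        (onesIn v (vertRowBlock n dx dy pu) (vertColBlock n dx dy p) : ℤ)
        = (colSize n dx dy pu : ℤ) - pathCount n dx dy L (pu - 1) pu := by
      calc ∑ p ∈ Finset.Icc pu (2 * n + 1),
            (onesIn v (vertRowBlock n dx dy pu) (vertColBlock n dx dy p) : ℤ)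
          = ∑ p ∈ Finset.Icc pu (2 * n + 1), laceCount n dx dy L pu p :=
            Finset.sum_congr rfl (fun p hp => by
              rw [Finset.mem_Icc] at hp
              exact hv.2.1 pu p hpu1 hp.1 hp.2)
        _ = (colSize n dx dy pu : ℤ) - pathCount n dx dy L (pu - 1) pu :=
            sum_laceCount n dx dy L hpu1 hpu2
    have hZ2 : onesIn v (vertRowBlock n dx dy (2 * (n - m) + 1))
        (vertColBlock n dx dy (2 * (n - m)))
        = (matchingAt n dx dy L (2 * (n - m))).card :=
      hv.2.2.1 (2 * (n - m)) (by omega) (by omega)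
    rw [hIcc, show pu - 1 = 2 * (n - m) by omega, hpc, hcs]
    rw [show (2 : ℕ) * (n - m) + 1 = pu from rfl] at hZ2
    rw [hZ2]
    ring
  have hsumN : ∑ p ∈ A, onesIn v (vertRowBlock n dx dy pu) (vertColBlock n dx dy p)
      = (vertRowBlock n dx dy pu).card := by
    have hcard : (vertRowBlock n dx dy pu).card = dy m := by
      rw [hRB, Nat.card_Ico]; omega
    rw [hcard]
    exact_mod_cast hsumZ
  have hall := all_mem_of_sum_counts v (vertRowBlock n dx dy pu) A
    (vertColBlock n dx dy) ?_ hsumN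
  swap
  · intro p hp q hq hpq
    rw [hA, Finset.mem_insert, Finset.mem_Icc] at hp hq
    apply vertColBlock_disjoint (n := n) (dx := dx) (dy := dy) ?_ ?_ ?_ ?_ hpq <;> omega
  have hiRB : i ∈ vertRowBlock n dx dy pu := by
    rw [hRB, Finset.mem_Ico]; exact ⟨hi1, hi2⟩
  obtain ⟨p, hpA, hvp⟩ := hall i hiRB
  rw [hA, Finset.mem_insert, Finset.mem_Icc] at hpA
  -- every allowed block lies weakly east of colX (m+1)
  rcases hpA with hpA | hpA
  · subst hpA
    obtain ⟨h1, _, _, _⟩ := mem_vertColBlock_even (by omega) (by omega) (by omega) hvp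
    rw [show n - 2 * (n - m) / 2 + 1 = m + 1 by omega] at h1
    exact h1
  · rcases Nat.even_or_odd p with hpe | hpo
    · have hpe' : p % 2 = 0 := Nat.even_iff.mp hpe
      obtain ⟨h1, _, _, _⟩ := mem_vertColBlock_even hpe' (by omega) (by omega) hvp
      have hk : n - p / 2 + 1 ≤ m + 1 := by omega
      have := colX_antitone n dx hk
      omega
    · have hpo' : p % 2 = 1 := Nat.odd_iff.mp hpo
      obtain ⟨h1, _, _⟩ := mem_vertColBlock_odd hpo' (by omega) hvp
      have h2 : colX n dx (m + 1) ≤ colX n dx 0 := colX_antitone n dx (by omega)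
      rw [colX_zero] at h2
      omega

/-- (R2): every row of the block `x_k` has its 1 strictly west of the east edge of
the column block `y_k`. -/
lemma zel_row_upper (hL : IsLacingDiagram n dx dy L) (hv : IsZelevinsky n dx dy L v)
    (k : ℕ) (hk1 : 1 ≤ k) (hk2 : k ≤ n) :
    ∀ i, rowX n dx dy k ≤ i → i < rowX n dx dy k + dx k →
      v i < dX n dx + rowY dy (k + 1) := by
  intro i hi1 hi2
  set pu := 2 * (n - k) + 2 with hpu
  have hpu1 : 1 ≤ pu := by omega
  have hpu2 : pu ≤ 2 * n + 1 := by omega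
  have hRB : vertRowBlock n dx dy pu = Finset.Ico (rowX n dx dy k) (rowX n dx dy k + dx k) := by
    unfold vertRowBlock
    rw [if_neg (by omega), show n - pu / 2 + 1 = k by omega]
  have hcs : colSize n dx dy pu = dx k := by
    unfold colSize
    rw [if_neg (by omega), show n - pu / 2 + 1 = k by omega]
  have hme : matchingAt n dx dy L (2 * (n - k) + 1) = L.1 k := by
    unfold matchingAt
    rw [if_pos (by omega), show n - (2 * (n - k) + 1 - 1) / 2 = k by omega]
  have hcs' : colSize n dx dy (2 * (n - k) + 1) = dy k := by
    unfold colSize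
    rw [if_pos (by omega), show n - (2 * (n - k) + 1 - 1) / 2 = k by omega]
  have hbnd : ∀ q ∈ matchingAt n dx dy L (2 * (n - k) + 1),
      q.1 < colSize n dx dy (2 * (n - k) + 1) := by
    intro q hq
    rw [hme] at hq
    rw [hcs']
    exact ((hL.1 k hk1 hk2).1.1 _ hq).1
  have hpc : pathCount n dx dy L (2 * (n - k) + 1) (2 * (n - k) + 2)
      = (matchingAt n dx dy L (2 * (n - k) + 1)).card :=
    pathCount_matching n dx dy L (by omega) (by omega) hbnd
  set A := insert (2 * (n - k) + 1) (Finset.Icc pu (2 * n + 1)) with hA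
  have hnm : 2 * (n - k) + 1 ∉ Finset.Icc pu (2 * n + 1) := by
    rw [Finset.mem_Icc]; omega
  have hsumZ : (∑ p ∈ A, (onesIn v (vertRowBlock n dx dy pu) (vertColBlock n dx dy p) : ℤ))
      = (dx k : ℤ) := by
    rw [hA, Finset.sum_insert hnm]
    have hIcc : ∑ p ∈ Finset.Icc pu (2 * n + 1),
        (onesIn v (vertRowBlock n dx dy pu) (vertColBlock n dx dy p) : ℤ)
        = (colSize n dx dy pu : ℤ) - pathCount n dx dy L (pu - 1) pu := by
      calc ∑ p ∈ Finset.Icc pu (2 * n + 1),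
            (onesIn v (vertRowBlock n dx dy pu) (vertColBlock n dx dy p) : ℤ)
          = ∑ p ∈ Finset.Icc pu (2 * n + 1), laceCount n dx dy L pu p :=
            Finset.sum_congr rfl (fun p hp => by
              rw [Finset.mem_Icc] at hp
              exact hv.2.1 pu p hpu1 hp.1 hp.2)
        _ = (colSize n dx dy pu : ℤ) - pathCount n dx dy L (pu - 1) pu :=
            sum_laceCount n dx dy L hpu1 hpu2
    have hZ2 : onesIn v (vertRowBlock n dx dy (2 * (n - k) + 1 + 1))
        (vertColBlock n dx dy (2 * (n - k) + 1))
        = (matchingAt n dx dy L (2 * (n - k) + 1)).card :=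
      hv.2.2.1 (2 * (n - k) + 1) (by omega) (by omega)
    rw [hIcc, show pu - 1 = 2 * (n - k) + 1 by omega, hpc, hcs]
    rw [show (2 : ℕ) * (n - k) + 1 + 1 = pu by omega] at hZ2
    rw [hZ2]
    ring
  have hsumN : ∑ p ∈ A, onesIn v (vertRowBlock n dx dy pu) (vertColBlock n dx dy p)
      = (vertRowBlock n dx dy pu).card := by
    have hcard : (vertRowBlock n dx dy pu).card = dx k := by
      rw [hRB, Nat.card_Ico]; omega
    rw [hcard]
    exact_mod_cast hsumZ
  have hall := all_mem_of_sum_counts v (vertRowBlock n dx dy pu) A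
    (vertColBlock n dx dy) ?_ hsumN
  swap
  · intro p hp q hq hpq
    rw [hA, Finset.mem_insert, Finset.mem_Icc] at hp hq
    apply vertColBlock_disjoint (n := n) (dx := dx) (dy := dy) ?_ ?_ ?_ ?_ hpq <;> omega
  have hiRB : i ∈ vertRowBlock n dx dy pu := by
    rw [hRB, Finset.mem_Ico]; exact ⟨hi1, hi2⟩
  obtain ⟨p, hpA, hvp⟩ := hall i hiRB
  rw [hA, Finset.mem_insert, Finset.mem_Icc] at hpA
  rcases hpA with hpA | hpA
  · subst hpA
    obtain ⟨_, h2, h3⟩ := mem_vertColBlock_odd (by omega) (by omega) hvp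
    rw [show n - (2 * (n - k) + 1 - 1) / 2 = k by omega] at h2
    omega
  · rcases Nat.even_or_odd p with hpe | hpo
    · have hpe' : p % 2 = 0 := Nat.even_iff.mp hpe
      obtain ⟨_, h2, h3, h4⟩ := mem_vertColBlock_even hpe' (by omega) (by omega) hvp
      have h5 : colX n dx (n - p / 2) ≤ colX n dx 0 := colX_antitone n dx (by omega)
      rw [colX_zero] at h5
      omega
    · have hpo' : p % 2 = 1 := Nat.odd_iff.mp hpo
      obtain ⟨_, h2, h3⟩ := mem_vertColBlock_odd hpo' (by omega) hvp
      have hj : n - (p - 1) / 2 + 1 ≤ k + 1 := by omega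
      have := rowY_mono dy hj
      omega

end ZelevinskyBounds

set_option maxHeartbeats 1000000 in
/-- Every `P ∈ Pipes(v_0, v(Ω))` contains `P_*` as a subset. -/
theorem pstar_subset (n : ℕ) (dx dy : ℕ → ℕ) (L₀ : LaceData)
    (hL₀ : IsLacingDiagram n dx dy L₀) (vZ : Equiv.Perm ℕ)
    (hvZ : IsZelevinsky n dx dy L₀ vZ)
    (P : Finset (ℕ × ℕ)) (hP : P ∈ pipesNW n dx dy vZ) :
    Pstar n dx dy ⊆ P := by
  classical
  rw [pipesNW, Finset.mem_filter, Finset.mem_powerset] at hP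
  obtain ⟨hPsub, hdem⟩ := hP
  have hrect : ∀ q ∈ P, q.1 < dY n dy ∧ q.2 < dX n dx := by
    intro q hq
    have := hPsub hq
    rw [Finset.mem_product, Finset.mem_range, Finset.mem_range] at this
    exact this
  have hDYd : dY n dy ≤ dd n dx dy := by unfold dd; omega
  have hDXd : dX n dx ≤ dd n dx dy := by unfold dd; omega
  have hword_eq : hword (pipeWord (dd n dx dy) (dd n dx dy) P) = vZ := hdem
  have hrowYtop : rowY dy (n + 1) = dY n dy := rfl
  intro q hq
  obtain ⟨i, j⟩ := q
  rw [Pstar, Finset.mem_sdiff, Finset.mem_product, Finset.mem_range, Finset.mem_range] at hq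
  obtain ⟨⟨hiDY, hjDX⟩, hsn⟩ := hq
  have hjcol : j < colX n dx 0 := by rw [colX_zero]; exact hjDX
  obtain ⟨k', hk1, hk2, hk3, hk4⟩ := colX_block n dx j hjcol
  have hcolsucc := colX_succ n dx hk1 hk2
  -- the tile is outside the snake: above or below the snake rows in its column
  have hsnk : i < rowY dy (k' - 1) ∨ rowY dy (k' + 1) ≤ i := by
    by_contra hcon
    push_neg at hcon
    obtain ⟨hcon1, hcon2⟩ := hcon
    apply hsn
    rw [snake, Finset.mem_biUnion]
    refine ⟨k', Finset.mem_Icc.mpr ⟨hk1, hk2⟩, ?_⟩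
    rw [Finset.mem_union]
    have hcolj : j ∈ Finset.Ico (colX n dx k') (colX n dx k' + dx k') := by
      rw [Finset.mem_Ico]
      exact ⟨hk3, by omega⟩
    rcases Nat.lt_or_ge i (rowY dy k') with hik | hik
    · left
      rw [alphaBlock, Finset.mem_product]
      refine ⟨?_, hcolj⟩
      rw [Finset.mem_Ico]
      have : rowY dy (k' - 1) + dy (k' - 1) = rowY dy k' := by
        have := rowY_succ dy (k' - 1)
        rw [show k' - 1 + 1 = k' by omega] at this
        omega
      omega
    · right
      rw [betaBlock, Finset.mem_product]
      refine ⟨?_, hcolj⟩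
      rw [Finset.mem_Ico]
      have := rowY_succ dy k'
      omega
  rcases hsnk with hA | hB
  · -- Region A: northwest of the snake; use the dominance lemma
    refine dominance_lemma P (dd n dx dy) (rowY dy (k' - 1)) (colX n dx (k' - 1))
      ?_ ?_ ?_ i j hA hk4
    · have h1 : rowY dy (k' - 1) ≤ rowY dy (n + 1) := rowY_mono dy (by omega)
      omega
    · have h1 : colX n dx (k' - 1) ≤ colX n dx 0 := colX_antitone n dx (by omega)
      rw [colX_zero] at h1
      omega
    · intro i' hi'
      rw [hword_eq]
      obtain ⟨m', hm'1, hm'2, hm'3⟩ := rowY_block dy (k' - 1) i' hi'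
      have hm'n : m' ≤ n := by omega
      have hlow := zel_row_lower hL₀ hvZ m' hm'n i' hm'2 (by
        have := rowY_succ dy m'
        omega)
      have : colX n dx (k' - 1) ≤ colX n dx (m' + 1) := colX_antitone n dx (by omega)
      omega
  · -- Region B: southeast of the snake; use the south-pipe lemma
    by_contra hnP
    set F := (Finset.range (dY n dy) ×ˢ Finset.range (dX n dx)).filter
      (fun q : ℕ × ℕ => ∃ kk, 1 ≤ kk ∧ kk ≤ n ∧ colX n dx kk ≤ q.2 ∧
        q.2 < colX n dx (kk - 1) ∧ rowY dy (kk + 1) ≤ q.1) with hF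
    have hmemF : ∀ q : ℕ × ℕ, q ∈ F ↔ q.1 < dY n dy ∧ q.2 < dX n dx ∧
        ∃ kk, 1 ≤ kk ∧ kk ≤ n ∧ colX n dx kk ≤ q.2 ∧
          q.2 < colX n dx (kk - 1) ∧ rowY dy (kk + 1) ≤ q.1 := by
      intro q
      rw [hF, Finset.mem_filter, Finset.mem_product, Finset.mem_range, Finset.mem_range]
      exact ⟨fun ⟨⟨a, b⟩, c⟩ => ⟨a, b, c⟩, fun ⟨a, b, c⟩ => ⟨⟨a, b⟩, c⟩⟩
    set S := F \ P with hS
    have hmemS : ∀ q : ℕ × ℕ, q ∈ S ↔ q ∈ F ∧ q ∉ P := by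
      intro q
      rw [hS, Finset.mem_sdiff]
    have hSne : S.Nonempty := by
      refine ⟨(i, j), (hmemS (i, j)).mpr ⟨(hmemF (i, j)).mpr ⟨hiDY, hjDX, k', hk1, hk2, hk3, hk4, hB⟩, hnP⟩⟩
    obtain ⟨q0, hq0S, hq0max⟩ := S.exists_max_image Prod.fst hSne
    set t := q0.1 with htdef
    have hStne : (S.filter (fun q : ℕ × ℕ => q.1 = t)).Nonempty :=
      ⟨q0, Finset.mem_filter.mpr ⟨hq0S, rfl⟩⟩
    obtain ⟨q1, hq1S, hq1max⟩ := (S.filter (fun q : ℕ × ℕ => q.1 = t)).exists_max_image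
      Prod.snd hStne
    rw [Finset.mem_filter] at hq1S
    obtain ⟨hq1S, hq1t⟩ := hq1S
    set js := q1.2 with hjsdef
    have hq1eq : q1 = (t, js) := by
      rw [← hq1t, hjsdef]
    rw [hq1eq] at hq1S
    obtain ⟨hq1F, hq1P⟩ := (hmemS (t, js)).mp hq1S
    obtain ⟨htDY, hjsDX, k₁, hk₁1, hk₁2, hk₁3, hk₁4, hk₁5⟩ := (hmemF (t, js)).mp hq1F
    -- auxiliary: the block of any column east of js lies weakly east of x_{k₁}
    have hblock_le : ∀ j', js ≤ j' → j' < dX n dx → ∀ kk, 1 ≤ kk → kk ≤ n →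
        colX n dx kk ≤ j' → j' < colX n dx (kk - 1) → rowY dy (kk + 1) ≤ t := by
      intro j' hj1 hj2 kk h1 h2 h3 h4
      have hkk : kk ≤ k₁ := by
        by_contra hc
        push_neg at hc
        have : colX n dx (kk - 1) ≤ colX n dx k₁ := colX_antitone n dx (by omega)
        omega
      have := rowY_mono dy (show kk + 1 ≤ k₁ + 1 by omega)
      omega
    have hcol : ∀ r j', t < r → r < dY n dy → js ≤ j' → j' < dX n dx → (r, j') ∈ P := by
      intro r j' hr1 hr2 hj1 hj2
      by_contra hc
      obtain ⟨kk, h1, h2, h3, h4⟩ := colX_block n dx j' (by rw [colX_zero]; exact hj2)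
      have hmem : (r, j') ∈ S := (hmemS (r, j')).mpr
        ⟨(hmemF (r, j')).mpr ⟨hr2, hj2, kk, h1, h2, h3, h4, by
          have := hblock_le j' hj1 hj2 kk h1 h2 h3 h4
          omega⟩, hc⟩
      have := hq0max (r, j') hmem
      simp only at this
      omega
    have hrow : ∀ j', js < j' → j' < dX n dx → (t, j') ∈ P := by
      intro j' hj1 hj2
      by_contra hc
      obtain ⟨kk, h1, h2, h3, h4⟩ := colX_block n dx j' (by rw [colX_zero]; exact hj2)
      have hmem : (t, j') ∈ S := (hmemS (t, j')).mpr
        ⟨(hmemF (t, j')).mpr ⟨htDY, hj2, kk, h1, h2, h3, h4,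
          hblock_le j' (by omega) hj2 kk h1 h2 h3 h4⟩, hc⟩
      have := hq1max (t, j') (Finset.mem_filter.mpr ⟨hmem, rfl⟩)
      simp only at this
      omega
    have hmain := south_pipe_lemma P (dd n dx dy) (dY n dy) (dX n dx) hrect hDYd hDXd
      t js htDY hjsDX hq1P hcol hrow
    rw [hword_eq] at hmain
    -- contradiction with the (R2) upper bound for the row block x_{k₁}
    have hup := zel_row_upper hL₀ hvZ k₁ hk₁1 hk₁2 (dY n dy + js) ?_ ?_
    · omega
    · unfold rowX
      omega
    · unfold rowX
      have := colX_succ n dx hk₁1 hk₁2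
      omega

end QP
end
end
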